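/- arXiv:1206.3539 — 6 statements merged into one kernel-verified Lean document; each statement's English description precedes it below -/
import Mathlib

section
/- Let X be a closed subspace of a Banach space Y such that X is a super-ideal in Y. If Y has the local diameter 2 property (every slice of the closed unit ball B_Y has diameter 2), then X has the local diameter 2 property. -/
universe u v

open Metric Set

section Defs

variable {Y : Type*} [NormedAddCommGroup Y] [NormedSpace ℝ Y]

/-- `X` is an ideal in `Y`. -/
def IsIdeal (X : Subspace ℝ Y) : Prop :=
  ∀ ε : ℝ, 0 < ε → ∀ E : Subspace ℝ Y, FiniteDimensional ℝ E →
    ∃ T : E →ₗ[ℝ] X,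
      (∀ e : E, (e : Y) ∈ X → ((T e : X) : Y) = (e : Y)) ∧
      (∀ e : E, ‖T e‖ ≤ (1 + ε) * ‖e‖)

/-- `X` is a super-ideal in `Y`. -/
def IsSuperIdeal (X : Subspace ℝ Y) : Prop :=
  ∀ ε : ℝ, 0 < ε → ∀ E : Subspace ℝ Y, FiniteDimensional ℝ E →
    ∃ T : E →ₗ[ℝ] X,
      (∀ e : E, (e : Y) ∈ X → ((T e : X) : Y) = (e : Y)) ∧
      (∀ e : E, (1 + ε)⁻¹ * ‖e‖ ≤ ‖T e‖ ∧ ‖T e‖ ≤ (1 + ε) * ‖e‖)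

/-- `X` is a super u-ideal in `Y`. -/
def IsSuperUIdeal (X : Subspace ℝ Y) : Prop :=
  ∀ ε : ℝ, 0 < ε → ∀ E : Subspace ℝ Y, FiniteDimensional ℝ E →
    ∃ T : E →ₗ[ℝ] X,
      (∀ e : E, (e : Y) ∈ X → ((T e : X) : Y) = (e : Y)) ∧
      (∀ e : E, (1 + ε)⁻¹ * ‖e‖ ≤ ‖T e‖ ∧ ‖T e‖ ≤ (1 + ε) * ‖e‖) ∧
      (∀ e : E, ‖(e : Y) - (2 : ℝ) • ((T e : X) : Y)‖ ≤ (1 + ε) * ‖e‖)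

/-- `φ : X* → Y*` is a Hahn-Banach extension operator. -/
def IsHahnBanachExtensionOperator (X : Subspace ℝ Y)
    (φ : (X →L[ℝ] ℝ) →L[ℝ] (Y →L[ℝ] ℝ)) : Prop :=
  ∀ f : X →L[ℝ] ℝ, (∀ x : X, φ f (x : Y) = f x) ∧ ‖φ f‖ = ‖f‖

/-- A set of functionals `V ⊆ Y*` is 1-norming for `Y`. -/
def IsOneNorming (V : Set (Y →L[ℝ] ℝ)) : Prop :=
  ∀ y : Y, ‖y‖ = sSup {r : ℝ | ∃ v ∈ V, ‖v‖ ≤ 1 ∧ r = |v y|}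

end Defs

section Props

variable (Z : Type*) [NormedAddCommGroup Z] [NormedSpace ℝ Z]

/-- A slice of the closed unit ball of `Z`. -/
def IsSlice (S : Set Z) : Prop :=
  ∃ (f : Z →L[ℝ] ℝ) (ε : ℝ), ‖f‖ = 1 ∧ 0 < ε ∧
    S = {z | z ∈ closedBall (0 : Z) 1 ∧ 1 - ε < f z}

/-- The local diameter 2 property. -/
def HasLocalDiameterTwoProperty : Prop :=
  ∀ S : Set Z, IsSlice Z S → Metric.diam S = 2

/-- The diameter 2 property. -/
def HasDiameterTwoProperty : Prop :=
  ∀ U : Set Z, U.Nonempty →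
    (∃ V : Set Z, @IsOpen (WeakSpace ℝ Z) _ V ∧ U = V ∩ closedBall (0 : Z) 1) →
    Metric.diam U = 2

/-- The strong diameter 2 property. -/
def HasStrongDiameterTwoProperty : Prop :=
  ∀ (n : ℕ), 0 < n → ∀ (S : Fin n → Set Z) (lam : Fin n → ℝ),
    (∀ i, IsSlice Z (S i)) → (∀ i, 0 ≤ lam i) → (∑ i, lam i) = 1 →
    Metric.diam {z : Z | ∃ x : Fin n → Z, (∀ i, x i ∈ S i) ∧ z = ∑ i, lam i • x i} = 2

/-- The Daugavet property. -/
def HasDaugavetProperty : Prop :=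
  ∀ T : Z →L[ℝ] Z, Module.finrank ℝ (LinearMap.range (T : Z →ₗ[ℝ] Z)) = 1 →
    ‖ContinuousLinearMap.id ℝ Z + T‖ = 1 + ‖T‖

end Props

/-- `X` is a Gurariĭ space. -/
def IsGurarii (X : Type*) [NormedAddCommGroup X] [NormedSpace ℝ X] : Prop :=
  ∀ ε : ℝ, 0 < ε →
    ∀ (F : Type) [NormedAddCommGroup F] [NormedSpace ℝ F] [FiniteDimensional ℝ F],
      ∀ (E : Subspace ℝ F) (TE : E →ₗᵢ[ℝ] X),
        ∃ TF : F →ₗ[ℝ] X,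
          (∀ e : E, TF (e : F) = TE e) ∧
          (∀ f : F, (1 + ε)⁻¹ * ‖f‖ ≤ ‖TF f‖ ∧ ‖TF f‖ ≤ (1 + ε) * ‖f‖)

/-- `X` is a Lindenstrauss space: its dual is isometric to some `L¹(μ)`. -/
def IsLindenstrauss (X : Type u) [NormedAddCommGroup X] [NormedSpace ℝ X] : Prop :=
  ∃ (α : Type u) (m : MeasurableSpace α) (μ : @MeasureTheory.Measure α m),
    Nonempty ((X →L[ℝ] ℝ) ≃ₗᵢ[ℝ] MeasureTheory.Lp ℝ 1 μ)

open Filter Topology Submodule in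
theorem aux_superIdeal {Y : Type*} [NormedAddCommGroup Y] [NormedSpace ℝ Y]
    {X : Subspace ℝ Y} (hX : IsSuperIdeal X) (f : X →L[ℝ] ℝ) :
    ∃ g : Y →L[ℝ] ℝ, ‖g‖ ≤ ‖f‖ ∧ (∀ x : X, g (x : Y) = f x) ∧
      ∀ θ : ℝ, 0 < θ → ∀ η : ℝ, 0 < η → ∀ y₁ y₂ : Y,
        ∃ x₁ x₂ : X,
          ‖x₁‖ ≤ (1 + η) * ‖y₁‖ ∧ ‖x₂‖ ≤ (1 + η) * ‖y₂‖ ∧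
          (1 + η)⁻¹ * ‖y₁ - y₂‖ ≤ ‖x₁ - x₂‖ ∧
          |f x₁ - g y₁| < θ ∧ |f x₂ - g y₂| < θ := by
  classical
  letI instSL : SemilatticeSup {E : Subspace ℝ Y // FiniteDimensional ℝ E} :=
    { (inferInstance : PartialOrder {E : Subspace ℝ Y // FiniteDimensional ℝ E}) with
      sup := fun E F => ⟨E.1 ⊔ F.1, by haveI := E.2; haveI := F.2; infer_instance⟩
      le_sup_left := fun a b => (le_sup_left : a.1 ≤ a.1 ⊔ b.1)
      le_sup_right := fun a b => (le_sup_right : b.1 ≤ a.1 ⊔ b.1)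
      sup_le := fun a b c h h' => (sup_le h h' : a.1 ⊔ b.1 ≤ c.1) }
  haveI : Nonempty ({E : Subspace ℝ Y // FiniteDimensional ℝ E} × ℕ) :=
    ⟨(⟨⊥, inferInstance⟩, 0)⟩
  set ι := {E : Subspace ℝ Y // FiniteDimensional ℝ E} × ℕ with hι
  haveI : (atTop : Filter ι).NeBot := atTop_neBot
  let U : Ultrafilter ι := Ultrafilter.of atTop
  have hU : (U : Filter ι) ≤ atTop := Ultrafilter.of_le _
  have hTe : ∀ i : ι, ∃ T : i.1.1 →ₗ[ℝ] X,
      (∀ e : i.1.1, (e : Y) ∈ X → ((T e : X) : Y) = (e : Y)) ∧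
      (∀ e : i.1.1, (1 + (1 / (i.2 + 1) : ℝ))⁻¹ * ‖e‖ ≤ ‖T e‖ ∧
        ‖T e‖ ≤ (1 + (1 / (i.2 + 1) : ℝ)) * ‖e‖) :=
    fun i => hX _ (by positivity) _ i.1.2
  choose T hT1 hT2 using hTe
  let r : Y → ι → ℝ := fun y i => if h : y ∈ i.1.1 then f (T i ⟨y, h⟩) else 0
  have hnorm : ∀ (i : ι) (y : Y) (h : y ∈ i.1.1), ‖(⟨y, h⟩ : i.1.1)‖ = ‖y‖ :=
    fun _ _ _ => rfl
  -- a generic "eventually in E" fact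
  have hmem : ∀ (y : Y) (n : ℕ), ∀ᶠ i in (U : Filter ι), y ∈ i.1.1 ∧ n ≤ i.2 := by
    intro y n
    apply hU
    haveI : FiniteDimensional ℝ (span ℝ ({y} : Set Y)) := inferInstance
    filter_upwards [eventually_ge_atTop ((⟨span ℝ ({y} : Set Y), inferInstance⟩, n) : ι)]
      with i hi
    refine ⟨?_, hi.2⟩
    exact (Subtype.coe_le_coe.mpr hi.1) (mem_span_singleton_self y)
  -- pointwise bound on r
  have hrabs : ∀ (y : Y) (i : ι) (h : y ∈ i.1.1),
      |f (T i ⟨y, h⟩)| ≤ ‖f‖ * ((1 + (1 / (i.2 + 1) : ℝ)) * ‖y‖) := by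
    intro y i h
    calc |f (T i ⟨y, h⟩)| ≤ ‖f‖ * ‖T i ⟨y, h⟩‖ := by
          simpa [Real.norm_eq_abs] using f.le_opNorm (T i ⟨y, h⟩)
      _ ≤ ‖f‖ * ((1 + (1 / (i.2 + 1) : ℝ)) * ‖y‖) := by
          have := (hT2 i ⟨y, h⟩).2
          rw [hnorm] at this
          exact mul_le_mul_of_nonneg_left this (norm_nonneg f)
  -- existence of limits along the ultrafilter
  have hlim : ∀ y : Y, ∃ L, Tendsto (r y) (U : Filter ι) (𝓝 L) := by
    intro y
    have hb : ∀ i, r y i ∈ Icc (-(2 * ‖f‖ * ‖y‖)) (2 * ‖f‖ * ‖y‖) := by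
      intro i
      have h0 : |r y i| ≤ 2 * ‖f‖ * ‖y‖ := by
        simp only [r]
        split
        · next h =>
            refine (hrabs y i h).trans ?_
            have h1 : (1 / (i.2 + 1) : ℝ) ≤ 1 := by
              rw [div_le_one (by positivity)]
              simp
            have h2 : ‖f‖ * ((1 / (i.2 + 1) : ℝ) * ‖y‖) ≤ ‖f‖ * (1 * ‖y‖) :=
              mul_le_mul_of_nonneg_left (mul_le_mul_of_nonneg_right h1 (norm_nonneg y))
                (norm_nonneg f)
            nlinarith [h2]
        · simp only [abs_zero]; positivity
      exact abs_le.mp h0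
    obtain ⟨L, -, hL⟩ := isCompact_Icc.ultrafilter_le_nhds (U.map (r y))
      (le_principal_iff.mpr (by
        rw [Ultrafilter.coe_map, Filter.mem_map]
        exact Eventually.of_forall hb))
    exact ⟨L, by rwa [Ultrafilter.coe_map] at hL⟩
  choose G hG using hlim
  -- additivity
  have hadd : ∀ y z : Y, G (y + z) = G y + G z := by
    intro y z
    refine tendsto_nhds_unique (hG (y + z)) ?_
    refine Tendsto.congr' ?_ ((hG y).add (hG z))
    filter_upwards [hmem y 0, hmem z 0] with i hi hj
    obtain ⟨hy, -⟩ := hi; obtain ⟨hz, -⟩ := hj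
    have hyz : y + z ∈ i.1.1 := add_mem hy hz
    simp only [r, dif_pos hy, dif_pos hz, dif_pos hyz]
    rw [show (⟨y + z, hyz⟩ : i.1.1) = ⟨y, hy⟩ + ⟨z, hz⟩ from rfl, map_add, map_add]
  have hsmul : ∀ (c : ℝ) (y : Y), G (c • y) = c * G y := by
    intro c y
    refine tendsto_nhds_unique (hG (c • y)) ?_
    refine Tendsto.congr' ?_ ((hG y).const_mul c)
    filter_upwards [hmem y 0] with i hi
    obtain ⟨hy, -⟩ := hi
    have hcy : c • y ∈ i.1.1 := smul_mem _ c hy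
    simp only [r, dif_pos hy, dif_pos hcy]
    rw [show (⟨c • y, hcy⟩ : i.1.1) = c • (⟨y, hy⟩ : i.1.1) from rfl, map_smul, map_smul,
      smul_eq_mul]
  -- norm bound
  have hGbound : ∀ y : Y, |G y| ≤ ‖f‖ * ‖y‖ := by
    intro y
    have key : ∀ n : ℕ, |G y| ≤ (1 + (1 / (n + 1) : ℝ)) * (‖f‖ * ‖y‖) := by
      intro n
      refine le_of_tendsto (hG y).abs ?_
      filter_upwards [hmem y n] with i hi
      obtain ⟨hy, hn⟩ := hi
      have h1 : (1 / (i.2 + 1) : ℝ) ≤ 1 / (n + 1) := by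
        apply one_div_le_one_div_of_le (by positivity)
        have : (n : ℝ) ≤ i.2 := by exact_mod_cast hn
        linarith
      simp only [r, dif_pos hy]
      refine (hrabs y i hy).trans ?_
      nlinarith [norm_nonneg f, norm_nonneg y, mul_nonneg (norm_nonneg f) (norm_nonneg y)]
    have h1 : Tendsto (fun n : ℕ => (1 + (1 / (n + 1) : ℝ)) * (‖f‖ * ‖y‖)) atTop
        (𝓝 ((1 + 0) * (‖f‖ * ‖y‖))) :=
      ((tendsto_const_nhds.add tendsto_one_div_add_atTop_nhds_zero_nat).mul tendsto_const_nhds)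
    have := ge_of_tendsto' h1 key
    simpa using this
  -- extension
  have hext : ∀ x : X, G (x : Y) = f x := by
    intro x
    refine tendsto_nhds_unique (hG (x : Y)) ?_
    refine Tendsto.congr' ?_ (tendsto_const_nhds (x := f x))
    filter_upwards [hmem (x : Y) 0] with i hi
    obtain ⟨hy, -⟩ := hi
    simp only [r, dif_pos hy]
    congr 1
    exact Subtype.ext (hT1 i ⟨(x : Y), hy⟩ x.2).symm
  let gL : Y →ₗ[ℝ] ℝ :=
    { toFun := G
      map_add' := hadd
      map_smul' := by intro c y; simpa using hsmul c y }
  let g : Y →L[ℝ] ℝ := gL.mkContinuous ‖f‖ (fun y => by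
    simpa [Real.norm_eq_abs, gL] using hGbound y)
  have hgapp : ∀ y : Y, g y = G y := fun y => rfl
  refine ⟨g, gL.mkContinuous_norm_le (norm_nonneg f) _, fun x => by rw [hgapp]; exact hext x, ?_⟩
  intro θ hθ η hη y₁ y₂
  obtain ⟨N, hN⟩ := exists_nat_gt (1 / η)
  have hNη : (1 / (N + 1) : ℝ) ≤ η := by
    rw [div_le_iff₀ (by positivity)]
    rw [div_lt_iff₀ hη] at hN
    nlinarith
  have hev2 : ∀ᶠ i in (U : Filter ι), |r y₁ i - G y₁| < θ := by
    have := Metric.tendsto_nhds.mp (hG y₁) θ hθ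
    simpa [Real.dist_eq] using this
  have hev3 : ∀ᶠ i in (U : Filter ι), |r y₂ i - G y₂| < θ := by
    have := Metric.tendsto_nhds.mp (hG y₂) θ hθ
    simpa [Real.dist_eq] using this
  obtain ⟨i, ⟨⟨hy₁, hNi⟩, ⟨hy₂, -⟩⟩, h1, h2⟩ :=
    (((hmem y₁ N).and (hmem y₂ N)).and (hev2.and hev3)).exists
  have hηi : (1 / (i.2 + 1) : ℝ) ≤ η := by
    refine le_trans ?_ hNη
    apply one_div_le_one_div_of_le (by positivity)
    have : (N : ℝ) ≤ i.2 := by exact_mod_cast hNi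
    linarith
  have hεpos : (0 : ℝ) < 1 + (1 / (i.2 + 1) : ℝ) := by positivity
  refine ⟨T i ⟨y₁, hy₁⟩, T i ⟨y₂, hy₂⟩, ?_, ?_, ?_, ?_, ?_⟩
  · have := (hT2 i ⟨y₁, hy₁⟩).2
    rw [hnorm] at this
    refine this.trans ?_
    exact mul_le_mul_of_nonneg_right (by linarith) (norm_nonneg y₁)
  · have := (hT2 i ⟨y₂, hy₂⟩).2
    rw [hnorm] at this
    refine this.trans ?_
    exact mul_le_mul_of_nonneg_right (by linarith) (norm_nonneg y₂)
  · have hsub : (⟨y₁, hy₁⟩ : i.1.1) - ⟨y₂, hy₂⟩ = ⟨y₁ - y₂, sub_mem hy₁ hy₂⟩ := rfl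
    have := (hT2 i ⟨y₁ - y₂, sub_mem hy₁ hy₂⟩).1
    rw [hnorm] at this
    rw [← hsub, map_sub] at this
    refine le_trans ?_ this
    apply mul_le_mul_of_nonneg_right _ (norm_nonneg _)
    exact inv_anti₀ hεpos (by linarith)
  · have : r y₁ i = f (T i ⟨y₁, hy₁⟩) := by simp only [r, dif_pos hy₁]
    rw [hgapp, ← this]; exact h1
  · have : r y₂ i = f (T i ⟨y₂, hy₂⟩) := by simp only [r, dif_pos hy₂]
    rw [hgapp, ← this]; exact h2

set_option maxHeartbeats 1000000 in
theorem superIdeal_localDiameterTwoProperty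
    (Y : Type*) [NormedAddCommGroup Y] [NormedSpace ℝ Y] [CompleteSpace Y]
    (X : Subspace ℝ Y) (hXc : IsClosed (X : Set Y)) (hX : IsSuperIdeal X)
    (hY : HasLocalDiameterTwoProperty Y) :
    HasLocalDiameterTwoProperty X := by
  intro S hS
  obtain ⟨f, ε, hf, hε, rfl⟩ := hS
  obtain ⟨g, hgle, hgext, hgapx⟩ := aux_superIdeal hX f
  have hg1 : ‖g‖ = 1 := by
    refine le_antisymm (hgle.trans_eq hf) ?_
    have hcomp : f = g.comp X.subtypeL := by
      ext x
      rw [ContinuousLinearMap.comp_apply, Submodule.subtypeL_apply, hgext x]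
    have h1 : ‖X.subtypeL‖ ≤ 1 :=
      ContinuousLinearMap.opNorm_le_bound _ zero_le_one (fun x => by simp)
    calc (1 : ℝ) = ‖f‖ := hf.symm
      _ ≤ ‖g‖ * ‖X.subtypeL‖ := by
          rw [hcomp]; exact ContinuousLinearMap.opNorm_comp_le _ _
      _ ≤ ‖g‖ * 1 := mul_le_mul_of_nonneg_left h1 (norm_nonneg g)
      _ = ‖g‖ := mul_one _
  set S : Set X := {z | z ∈ closedBall (0 : X) 1 ∧ 1 - ε < f z} with hSdef
  have hSsub : S ⊆ closedBall (0 : X) 1 := fun z hz => hz.1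
  have hSbd : Bornology.IsBounded S := Metric.isBounded_closedBall.subset hSsub
  have hupper : Metric.diam S ≤ 2 := by
    have h1 := Metric.diam_mono hSsub Metric.isBounded_closedBall
    have h2 : Metric.diam (closedBall (0 : X) 1) ≤ 2 * 1 :=
      Metric.diam_closedBall zero_le_one
    rw [mul_one] at h2
    exact h1.trans h2
  set ε₀ : ℝ := min ε (1/2) with hε₀
  have hε₀pos : 0 < ε₀ := lt_min hε (by norm_num)
  have hε₀le : ε₀ ≤ 1/2 := min_le_right _ _
  have hε₀ε : ε₀ ≤ ε := min_le_left _ _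
  have key : ∀ δ : ℝ, 0 < δ → δ ≤ 1 → 2 - δ ≤ Metric.diam S := by
    intro δ hδ hδ1
    set η : ℝ := min (ε₀/16) (δ/16) with hη
    have hηpos : 0 < η := lt_min (by positivity) (by positivity)
    have hηε : η ≤ ε₀/16 := min_le_left _ _
    have hηδ : η ≤ δ/16 := min_le_right _ _
    set θ : ℝ := ε₀/8 with hθ
    have hθpos : 0 < θ := by positivity
    set S' : Set Y := {z | z ∈ closedBall (0 : Y) 1 ∧ 1 - θ < g z} with hS'
    have hdiam' : Metric.diam S' = 2 := hY S' ⟨g, θ, hg1, hθpos, rfl⟩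
    have hfar : ∃ y₁ ∈ S', ∃ y₂ ∈ S', 2 - δ/2 < dist y₁ y₂ := by
      by_contra hcon
      push_neg at hcon
      have : Metric.diam S' ≤ 2 - δ/2 :=
        Metric.diam_le_of_forall_dist_le (by linarith) (fun a ha b hb => hcon a ha b hb)
      rw [hdiam'] at this; linarith
    obtain ⟨y₁, hy₁, y₂, hy₂, hyfar⟩ := hfar
    obtain ⟨x₁, x₂, hb₁, hb₂, hlow, ha₁, ha₂⟩ := hgapx θ hθpos η hηpos y₁ y₂
    have hy₁n : ‖y₁‖ ≤ 1 := mem_closedBall_zero_iff.mp hy₁.1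
    have hy₂n : ‖y₂‖ ≤ 1 := mem_closedBall_zero_iff.mp hy₂.1
    set c : ℝ := 1 + η with hc
    have hcpos : 0 < c := by positivity
    have hc1 : 1 ≤ c := by simp [hc]; linarith
    set x₁' : X := c⁻¹ • x₁ with hx₁'
    set x₂' : X := c⁻¹ • x₂ with hx₂'
    -- norms
    have hn₁ : ‖x₁'‖ ≤ 1 := by
      rw [hx₁', norm_smul, norm_inv, Real.norm_eq_abs, abs_of_pos hcpos]
      rw [inv_mul_le_iff₀ hcpos, mul_one]
      exact hb₁.trans (by nlinarith)
    have hn₂ : ‖x₂'‖ ≤ 1 := by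
      rw [hx₂', norm_smul, norm_inv, Real.norm_eq_abs, abs_of_pos hcpos]
      rw [inv_mul_le_iff₀ hcpos, mul_one]
      exact hb₂.trans (by nlinarith)
    -- slice values
    have hfx₁ : 1 - ε₀/4 < f x₁ := by
      have h1 : 1 - θ < g y₁ := hy₁.2
      have h2 := (abs_lt.mp ha₁).1
      rw [hθ] at *
      linarith
    have hfx₂ : 1 - ε₀/4 < f x₂ := by
      have h1 : 1 - θ < g y₂ := hy₂.2
      have h2 := (abs_lt.mp ha₂).1
      rw [hθ] at *
      linarith
    have hslice : ∀ x : X, 1 - ε₀/4 < f x → 1 - ε < f (c⁻¹ • x) := by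
      intro x hx
      rw [map_smul, smul_eq_mul]
      have hkey : (1 - ε₀) * c < 1 - ε₀/4 := by nlinarith
      have : (1 - ε₀) * c < f x := lt_of_lt_of_le hkey hx.le
      have h2 : 1 - ε₀ < c⁻¹ * f x := by
        rw [lt_inv_mul_iff₀ hcpos]
        linarith [hkey, hx]
      linarith [hε₀ε, h2]
    have hm₁ : x₁' ∈ S := ⟨mem_closedBall_zero_iff.mpr hn₁, hslice x₁ hfx₁⟩
    have hm₂ : x₂' ∈ S := ⟨mem_closedBall_zero_iff.mpr hn₂, hslice x₂ hfx₂⟩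
    -- distance
    have hdist : 2 - δ ≤ dist x₁' x₂' := by
      have hd : dist x₁' x₂' = c⁻¹ * ‖x₁ - x₂‖ := by
        rw [dist_eq_norm, hx₁', hx₂', ← smul_sub, norm_smul, norm_inv, Real.norm_eq_abs,
          abs_of_pos hcpos]
      have h1 : c⁻¹ * ‖y₁ - y₂‖ ≤ ‖x₁ - x₂‖ := hlow
      have h2 : 2 - δ/2 < ‖y₁ - y₂‖ := by rwa [dist_eq_norm] at hyfar
      have h3 : c⁻¹ * (c⁻¹ * (2 - δ/2)) ≤ c⁻¹ * (c⁻¹ * ‖y₁ - y₂‖) := by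
        have := h2.le
        gcongr
      have h4 : c⁻¹ * (c⁻¹ * ‖y₁ - y₂‖) ≤ c⁻¹ * ‖x₁ - x₂‖ := by
        gcongr
      have h5 : 2 - δ ≤ c⁻¹ * (c⁻¹ * (2 - δ/2)) := by
        have hη16 : η ≤ 1/16 := hηδ.trans (by linarith)
        have hcc : (2 - δ) * (c * c) ≤ 2 - δ/2 := by
          rw [hc]
          nlinarith [sq_nonneg η, mul_nonneg hηpos.le hδ.le, hηδ, hδ1, hη16, hηpos.le]
        have h6 : 2 - δ ≤ (2 - δ/2) / (c * c) :=
          (le_div_iff₀ (by positivity)).mpr hcc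
        have h7 : (2 - δ/2) / (c * c) = c⁻¹ * (c⁻¹ * (2 - δ/2)) := by
          rw [div_eq_mul_inv, mul_inv]; ring
        linarith [h6, h7 ▸ h6]
      rw [hd]
      linarith
    exact hdist.trans (Metric.dist_le_diam_of_mem hSbd hm₁ hm₂)
  refine le_antisymm hupper ?_
  by_contra hlt
  push_neg at hlt
  set δ : ℝ := min 1 (2 - Metric.diam S) / 2 with hδ
  have hδpos : 0 < δ := by
    have : 0 < min 1 (2 - Metric.diam S) := lt_min one_pos (by linarith)
    positivity
  have hδ1 : δ ≤ 1 := by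
    have : min 1 (2 - Metric.diam S) ≤ 1 := min_le_left _ _
    rw [hδ]; linarith
  have h1 := key δ hδpos hδ1
  have h2 : δ < 2 - Metric.diam S := by
    have h3 : min 1 (2 - Metric.diam S) ≤ 2 - Metric.diam S := min_le_right _ _
    have : 0 < min 1 (2 - Metric.diam S) := lt_min one_pos (by linarith)
    rw [hδ]; linarith
  linarith
end

section
/- Let Y be an infinite-dimensional Banach space. If every infinite-dimensional separable closed subspace X of Y that is an ideal in Y has the diameter 2 property, then Y has the diameter 2 property. -/
universe u v

open Metric Set

section Aux
variable {Y : Type*} [NormedAddCommGroup Y] [NormedSpace ℝ Y]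


lemma key_absorb (k m : ℕ) (g : Fin k → Y) :
    ∃ W : Set (Fin m → Y), W.Countable ∧ ∀ η : ℝ, 0 < η → ∀ y : Fin m → Y, ∃ w ∈ W,
      ∀ (b : Fin k → ℝ) (t : Fin m → ℝ),
        |‖∑ i, b i • g i + ∑ j, t j • w j‖ - ‖∑ i, b i • g i + ∑ j, t j • y j‖|
          ≤ η * max ‖b‖ ‖t‖ := by
  classical
  set K := closedBall (0 : (Fin k → ℝ) × (Fin m → ℝ)) 1 with hK
  have hcpt : IsCompact K := isCompact_closedBall _ _
  haveI : CompactSpace K := isCompact_iff_compactSpace.1 hcpt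
  have cont : ∀ y : Fin m → Y, Continuous fun p : K =>
      ‖∑ i, (p : (Fin k → ℝ) × (Fin m → ℝ)).1 i • g i
          + ∑ j, (p : (Fin k → ℝ) × (Fin m → ℝ)).2 j • y j‖ := by
    intro y
    have h1 : Continuous fun p : K => ((p : (Fin k → ℝ) × (Fin m → ℝ)).1) :=
      continuous_fst.comp continuous_subtype_val
    have h2 : Continuous fun p : K => ((p : (Fin k → ℝ) × (Fin m → ℝ)).2) :=
      continuous_snd.comp continuous_subtype_val
    refine Continuous.norm (Continuous.add ?_ ?_)
    · exact continuous_finset_sum _ fun i _ => ((continuous_apply i).comp h1).smul continuous_const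
    · exact continuous_finset_sum _ fun j _ => ((continuous_apply j).comp h2).smul continuous_const
  let Φ : (Fin m → Y) → C(K, ℝ) := fun y => ⟨_, cont y⟩
  have hsep : TopologicalSpace.IsSeparable (Set.range Φ) :=
    TopologicalSpace.IsSeparable.of_separableSpace _
  haveI := hsep.separableSpace
  obtain ⟨s, hsc, hsd⟩ := TopologicalSpace.exists_countable_dense (Set.range Φ)
  let ψ : Set.range Φ → (Fin m → Y) := fun c => c.2.choose
  have hψ : ∀ c : Set.range Φ, Φ (ψ c) = (c : C(K, ℝ)) := fun c => c.2.choose_spec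
  refine ⟨ψ '' s, hsc.image _, ?_⟩
  intro η hη y
  obtain ⟨c, hcball, hcs⟩ := Metric.dense_iff.1 hsd (⟨Φ y, Set.mem_range_self y⟩) η hη
  refine ⟨ψ c, Set.mem_image_of_mem _ hcs, ?_⟩
  have hdist : dist (Φ (ψ c)) (Φ y) ≤ η := by
    rw [hψ c]
    have h' := Metric.mem_ball.1 hcball
    rw [Subtype.dist_eq] at h'
    exact h'.le
  have hpt : ∀ p : K, |Φ (ψ c) p - Φ y p| ≤ η := by
    intro p
    have := (ContinuousMap.dist_le (le_of_lt hη)).1 hdist p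
    rwa [Real.dist_eq] at this
  intro b t
  set r := max ‖b‖ ‖t‖ with hr
  have hr0 : 0 ≤ r := le_trans (norm_nonneg b) (le_max_left _ _)
  rcases hr0.lt_or_eq with hrpos | h0
  case inr =>
    have hb' : ‖b‖ ≤ 0 := by rw [h0]; exact le_max_left _ _
    have ht' : ‖t‖ ≤ 0 := by rw [h0]; exact le_max_right _ _
    have hb : b = 0 := norm_eq_zero.1 (le_antisymm hb' (norm_nonneg b))
    have ht : t = 0 := norm_eq_zero.1 (le_antisymm ht' (norm_nonneg t))
    subst hb ht
    simp only [Pi.zero_apply, zero_smul, Finset.sum_const_zero, add_zero, sub_self, abs_zero]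
    exact mul_nonneg hη.le hr0
  case inl =>
    have hbt : ((r⁻¹ • b, r⁻¹ • t) : (Fin k → ℝ) × (Fin m → ℝ)) ∈ K := by
      simp only [hK, mem_closedBall, dist_zero_right, Prod.norm_def, norm_smul,
        norm_inv, Real.norm_eq_abs, abs_of_pos hrpos]
      rw [← mul_max_of_nonneg _ _ (inv_nonneg.2 hrpos.le)]
      rw [inv_mul_cancel₀ (ne_of_gt hrpos)]
    have key := hpt ⟨_, hbt⟩
    have hΦval : ∀ z : Fin m → Y, Φ z ⟨_, hbt⟩ =
        r⁻¹ * ‖∑ i, b i • g i + ∑ j, t j • z j‖ := by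
      intro z
      show ‖∑ i, (r⁻¹ • b) i • g i + ∑ j, (r⁻¹ • t) j • z j‖ = _
      have : ∀ (n : ℕ) (c : Fin n → ℝ) (v : Fin n → Y),
          ∑ i, (r⁻¹ • c) i • v i = r⁻¹ • ∑ i, c i • v i := by
        intro n c v
        rw [Finset.smul_sum]
        exact Finset.sum_congr rfl fun i _ => by simp [smul_smul]
      rw [this, this, ← smul_add, norm_smul, norm_inv, Real.norm_eq_abs, abs_of_pos hrpos]
    rw [hΦval, hΦval, ← mul_sub, abs_mul, abs_of_pos (inv_pos.2 hrpos)] at key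
    have key2 := mul_le_mul_of_nonneg_left key hrpos.le
    rw [← mul_assoc, mul_inv_cancel₀ (ne_of_gt hrpos), one_mul] at key2
    linarith [key2]


lemma isSeparable_span (G : Set Y) (hG : G.Countable) :
    TopologicalSpace.IsSeparable ((Submodule.span ℝ G : Submodule ℝ Y) : Set Y) := by
  classical
  haveI := hG.to_subtype
  let U : Set Y := ⋃ p : (Σ n : ℕ, Fin n → G), Set.range (fun c : Fin p.1 → ℝ =>
    ∑ i, c i • ((p.2 i : Y)))
  have hU : TopologicalSpace.IsSeparable U := by
    refine TopologicalSpace.isSeparable_iUnion.2 fun p => ?_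
    rw [← Set.image_univ]
    refine TopologicalSpace.IsSeparable.image ?_ ?_
    · exact TopologicalSpace.isSeparable_univ_iff.2 inferInstance
    · exact continuous_finset_sum _ fun i _ => (continuous_apply i).smul continuous_const
  refine TopologicalSpace.IsSeparable.mono hU ?_
  intro x hx
  induction hx using Submodule.span_induction with
  | mem g hg =>
    refine Set.mem_iUnion.2 ⟨⟨1, fun _ => ⟨g, hg⟩⟩, ⟨fun _ => 1, ?_⟩⟩
    simp
  | zero => exact Set.mem_iUnion.2 ⟨⟨0, fun i => i.elim0⟩, ⟨fun i => i.elim0, by simp⟩⟩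
  | add x y _ _ hx' hy' =>
    obtain ⟨p, c, hc⟩ := Set.mem_iUnion.1 hx'
    obtain ⟨q, e, he⟩ := Set.mem_iUnion.1 hy'
    refine Set.mem_iUnion.2 ⟨⟨p.1 + q.1, Fin.append p.2 q.2⟩, ⟨Fin.append c e, ?_⟩⟩
    simp only
    rw [Fin.sum_univ_add]
    simp only [Fin.append_left, Fin.append_right]
    dsimp only at hc he
    rw [hc, he]
  | smul r x _ hx' =>
    obtain ⟨p, c, hc⟩ := Set.mem_iUnion.1 hx'
    refine Set.mem_iUnion.2 ⟨p, ⟨r • c, ?_⟩⟩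
    dsimp only at hc
    simp only [Pi.smul_apply, smul_eq_mul, ← smul_smul, ← Finset.smul_sum, hc]


lemma exists_nat_linearIndependent (hY : ¬ FiniteDimensional ℝ Y) :
    ∃ u : ℕ → Y, LinearIndependent ℝ u := by
  let B := Module.Basis.ofVectorSpace ℝ Y
  haveI : Infinite (Module.Basis.ofVectorSpaceIndex ℝ Y) := by
    by_contra h
    rw [not_infinite_iff_finite] at h
    haveI := h
    haveI := Fintype.ofFinite (Module.Basis.ofVectorSpaceIndex ℝ Y)
    exact hY (Module.Finite.of_basis B)
  let emb := Infinite.natEmbedding (Module.Basis.ofVectorSpaceIndex ℝ Y)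
  exact ⟨B ∘ emb, B.linearIndependent.comp emb emb.injective⟩

lemma not_finiteDimensional_of_indep (X : Subspace ℝ Y) (u : ℕ → Y)
    (hu : LinearIndependent ℝ u) (hX : ∀ n, u n ∈ X) : ¬ FiniteDimensional ℝ X := by
  intro hFD
  have hLI : LinearIndependent ℝ (fun n => (⟨u n, hX n⟩ : X)) := by
    apply LinearIndependent.of_comp (X.subtype)
    exact hu
  have h1 := hLI.aleph0_le_rank
  have h2 := Module.rank_lt_aleph0 ℝ ↥X
  exact absurd h1 (not_le.2 h2)



set_option maxHeartbeats 2000000 in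
lemma exists_separable_ideal (S₀ : Set Y) (hS₀ : S₀.Countable) :
    ∃ X : Subspace ℝ Y, IsClosed (X : Set Y) ∧ TopologicalSpace.SeparableSpace X ∧
      S₀ ⊆ (X : Set Y) ∧ IsIdeal X := by
  classical
  choose 𝒲 hWc hWp using fun (k m : ℕ) (g : Fin k → Y) => key_absorb k m g
  let comps : ∀ k : ℕ, ℕ → (Fin k → Y) → Set Y := fun k m g => ⋃ w ∈ 𝒲 k m g, Set.range w
  have hcompc : ∀ k m g, (comps k m g).Countable := fun k m g =>
    (hWc k m g).biUnion fun w _ => (Set.finite_range w).countable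
  let step : Set Y → Set Y := fun s =>
    s ∪ ⋃ (k : ℕ) (m : ℕ) (g : Fin k → Y) (_ : Set.range g ⊆ s), comps k m g
  have hstep_sub : ∀ s, s ⊆ step s := fun s => Set.subset_union_left
  have hstep_count : ∀ s, s.Countable → (step s).Countable := by
    intro s hs
    refine hs.union ?_
    refine Set.countable_iUnion fun k => Set.countable_iUnion fun m => ?_
    have heq : (⋃ (g : Fin k → Y) (_ : Set.range g ⊆ s), comps k m g)
        = ⋃ g ∈ {g : Fin k → Y | Set.range g ⊆ s}, comps k m g := rfl
    rw [heq]
    have hgc : {g : Fin k → Y | Set.range g ⊆ s}.Countable := by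
      haveI := hs.to_subtype
      have hsub : {g : Fin k → Y | Set.range g ⊆ s} ⊆
          Set.range (fun f : Fin k → s => fun i => (f i : Y)) := by
        intro g hg
        exact ⟨fun i => ⟨g i, hg (Set.mem_range_self i)⟩, rfl⟩
      exact (Set.countable_range _).mono hsub
    exact hgc.biUnion fun g _ => hcompc k m g
  let Gs : ℕ → Set Y := fun n => step^[n] S₀
  have hGsucc : ∀ n, Gs (n + 1) = step (Gs n) := fun n => Function.iterate_succ_apply' step n S₀
  have hGmono : Monotone Gs := monotone_nat_of_le_succ fun n => by
    rw [hGsucc n]; exact hstep_sub _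
  have hGc : ∀ n, (Gs n).Countable := by
    intro n
    induction n with
    | zero => exact hS₀
    | succ n ih => rw [hGsucc n]; exact hstep_count _ ih
  let G : Set Y := ⋃ n, Gs n
  have hGcount : G.Countable := Set.countable_iUnion hGc
  let Xs : Subspace ℝ Y := (Submodule.span ℝ G).topologicalClosure
  have hGX : G ⊆ (Xs : Set Y) :=
    fun x hx => (Submodule.span ℝ G).le_topologicalClosure (Submodule.subset_span hx)
  have hXclosed : IsClosed (Xs : Set Y) := Submodule.isClosed_topologicalClosure _
  have hXsep : TopologicalSpace.SeparableSpace Xs := by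
    have h1 : (Xs : Set Y) = closure ((Submodule.span ℝ G : Submodule ℝ Y) : Set Y) := by
      rfl
    have h2 : TopologicalSpace.IsSeparable (Xs : Set Y) := by
      rw [h1]; exact (isSeparable_span G hGcount).closure
    exact h2.separableSpace
  have hS₀X : S₀ ⊆ (Xs : Set Y) := fun x hx => hGX (Set.mem_iUnion.2 ⟨0, hx⟩)
  -- absorption property of Xs
  have habs : ∀ (K : ℕ) (m : ℕ) (g : Fin K → Y), Set.range g ⊆ G → ∀ η : ℝ, 0 < η →
      ∀ y : Fin m → Y, ∃ w : Fin m → Y, (∀ j, w j ∈ Xs) ∧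
      ∀ (b : Fin K → ℝ) (t : Fin m → ℝ),
        |‖∑ i, b i • g i + ∑ j, t j • w j‖ - ‖∑ i, b i • g i + ∑ j, t j • y j‖|
          ≤ η * max ‖b‖ ‖t‖ := by
    intro K m g hg η hη y
    -- find a single stage containing range g
    have hstage : ∃ N, Set.range g ⊆ Gs N := by
      have hchoice : ∀ i : Fin K, ∃ n, g i ∈ Gs n := fun i => Set.mem_iUnion.1 (hg ⟨i, rfl⟩)
      choose f hf using hchoice
      refine ⟨Finset.univ.sup f, ?_⟩
      rintro x ⟨i, rfl⟩
      exact hGmono (Finset.le_sup (Finset.mem_univ i)) (hf i)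
    obtain ⟨N, hN⟩ := hstage
    obtain ⟨w, hwW, hwp⟩ := hWp K m g η hη y
    refine ⟨w, ?_, hwp⟩
    intro j
    have hwcomp : w j ∈ comps K m g := Set.mem_biUnion hwW ⟨j, rfl⟩
    have : w j ∈ Gs (N + 1) := by
      rw [hGsucc N]
      refine Set.mem_union_right _ ?_
      refine Set.mem_iUnion.2 ⟨K, Set.mem_iUnion.2 ⟨m, Set.mem_iUnion.2 ⟨g,
        Set.mem_iUnion.2 ⟨hN, hwcomp⟩⟩⟩⟩
    exact hGX (Set.mem_iUnion.2 ⟨N + 1, this⟩)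
  refine ⟨Xs, hXclosed, hXsep, hS₀X, ?_⟩
  intro ε hε E hE
  haveI := hE
  -- decomposition of E
  set XE : Subspace ℝ ↥E := Xs.comap E.subtype with hXE
  obtain ⟨CE, hcompl⟩ := Submodule.exists_isCompl XE
  set k := Module.finrank ℝ ↥XE
  set m := Module.finrank ℝ ↥CE
  let dB : Module.Basis (Fin k) ℝ ↥XE := Module.finBasis ℝ ↥XE
  let yB : Module.Basis (Fin m) ℝ ↥CE := Module.finBasis ℝ ↥CE
  let pX : ↥E →ₗ[ℝ] ↥XE := XE.projectionOnto CE hcompl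
  let pC : ↥E →ₗ[ℝ] ↥CE := CE.projectionOnto XE hcompl.symm
  let av : ↥E →ₗ[ℝ] (Fin k → ℝ) := dB.equivFun.toLinearMap ∘ₗ pX
  let tv : ↥E →ₗ[ℝ] (Fin m → ℝ) := yB.equivFun.toLinearMap ∘ₗ pC
  let d : Fin k → Y := fun i => ((dB i : ↥E) : Y)
  let yv : Fin m → Y := fun j => ((yB j : ↥E) : Y)
  have hdX : ∀ i, d i ∈ Xs := fun i => (dB i).2
  -- sum formulas
  have hsum1 : ∀ e : ↥E, ((pX e : ↥E) : Y) = ∑ i, av e i • d i := by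
    intro e
    conv_lhs => rw [← dB.sum_equivFun (pX e)]
    push_cast [Submodule.coe_sum]
    rfl
  have hsum2 : ∀ e : ↥E, ((pC e : ↥E) : Y) = ∑ j, tv e j • yv j := by
    intro e
    conv_lhs => rw [← yB.sum_equivFun (pC e)]
    push_cast [Submodule.coe_sum]
    rfl
  have hdecomp : ∀ e : ↥E, (e : Y) = ∑ i, av e i • d i + ∑ j, tv e j • yv j := by
    intro e
    rw [← hsum1, ← hsum2]
    have := Submodule.projection_add_projection_eq_self hcompl e
    exact_mod_cast (congrArg (Subtype.val) this).symm
  -- operator norm bound for coordinates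
  let AT : ↥E →ₗ[ℝ] (Fin k → ℝ) × (Fin m → ℝ) := av.prod tv
  let ATc := LinearMap.toContinuousLinearMap AT
  set C : ℝ := ‖ATc‖ + 1 with hCdef
  have hC : 0 < C := by positivity
  have hCa : ∀ e : ↥E, ‖av e‖ ≤ C * ‖e‖ := by
    intro e
    have h1 : ‖ATc e‖ ≤ C * ‖e‖ := by
      calc ‖ATc e‖ ≤ ‖ATc‖ * ‖e‖ := ATc.le_opNorm e
        _ ≤ C * ‖e‖ := by
          have : (0:ℝ) ≤ ‖e‖ := norm_nonneg e
          nlinarith [hCdef]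
    have h2 : ATc e = (av e, tv e) := rfl
    have h3 : ‖av e‖ ≤ ‖ATc e‖ := by rw [h2]; exact norm_fst_le (av e, tv e)
    linarith
  have hCt : ∀ e : ↥E, ‖tv e‖ ≤ C * ‖e‖ := by
    intro e
    have h1 : ‖ATc e‖ ≤ C * ‖e‖ := by
      calc ‖ATc e‖ ≤ ‖ATc‖ * ‖e‖ := ATc.le_opNorm e
        _ ≤ C * ‖e‖ := by
          have : (0:ℝ) ≤ ‖e‖ := norm_nonneg e
          nlinarith [hCdef]
    have h2 : ATc e = (av e, tv e) := rfl
    have h3 : ‖tv e‖ ≤ ‖ATc e‖ := by rw [h2]; exact norm_snd_le (av e, tv e)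
    linarith
  -- choose approximants in span G
  set σ : ℝ := ε / (8 * (k + 1) * C) with hσdef
  have hσ : 0 < σ := by positivity
  have hdapprox : ∀ i : Fin k, ∃ x ∈ (Submodule.span ℝ G : Submodule ℝ Y),
      dist (d i) x < σ := by
    intro i
    have h1 : d i ∈ closure ((Submodule.span ℝ G : Submodule ℝ Y) : Set Y) := hdX i
    exact Metric.mem_closure_iff.1 h1 σ hσ
  choose x hxspan hxclose using hdapprox
  -- common finite support in G
  have hxfin : ∀ i : Fin k, ∃ t : Finset Y, ↑t ⊆ G ∧
      x i ∈ Submodule.span ℝ (↑t : Set Y) := fun i =>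
    Submodule.mem_span_finite_of_mem_span (hxspan i)
  choose Ti hTiG hTix using hxfin
  let T : Finset Y := Finset.univ.biUnion Ti
  have hTG : ↑T ⊆ G := by
    intro z hz
    simp only [T, Finset.coe_biUnion, Set.mem_iUnion] at hz
    obtain ⟨i, _, hi⟩ := hz
    exact hTiG i hi
  set K0 := T.card with hK0
  let g : Fin K0 → Y := fun q => ((T.equivFin.symm q : T) : Y)
  have hgT : Set.range g = (T : Set Y) := by
    ext z
    constructor
    · rintro ⟨q, rfl⟩; exact (T.equivFin.symm q).2
    · intro hz; exact ⟨T.equivFin ⟨z, hz⟩, by simp [g]⟩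
  have hgG : Set.range g ⊆ G := hgT ▸ hTG
  have hxg : ∀ i : Fin k, x i ∈ Submodule.span ℝ (Set.range g) := by
    intro i
    rw [hgT]
    have hsub : (Ti i : Set Y) ⊆ (T : Set Y) := by
      have h' : Ti i ⊆ T := Finset.subset_biUnion_of_mem Ti (Finset.mem_univ i)
      exact_mod_cast h'
    exact Submodule.span_mono hsub (hTix i)
  have hxcoef : ∀ i : Fin k, ∃ c : Fin K0 → ℝ, ∑ q, c q • g q = x i := fun i =>
    (Submodule.mem_span_range_iff_exists_fun ℝ).1 (hxg i)
  choose R hR using hxcoef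
  -- bound for coefficient matrix
  set Mb : ℝ := (∑ i, ∑ q, |R i q|) + 1 with hMbdef
  have hMb : 0 < Mb := by
    have h' : (0:ℝ) ≤ ∑ i, ∑ q, |R i q| :=
      Finset.sum_nonneg fun i _ => Finset.sum_nonneg fun q _ => abs_nonneg _
    rw [hMbdef]; linarith
  set M : ℝ := (Mb + 1) * C with hMdef
  have hM : 0 < M := by positivity
  set η : ℝ := ε / (2 * M) with hηdef
  have hη : 0 < η := by positivity
  obtain ⟨w, hwX, hwp⟩ := habs K0 m g hgG η hη yv
  -- define the operator
  let T0 : ↥E →ₗ[ℝ] Y :=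
    { toFun := fun e => ∑ i, av e i • d i + ∑ j, tv e j • w j
      map_add' := by
        intro e₁ e₂
        simp only [map_add, Pi.add_apply, add_smul, Finset.sum_add_distrib]
        abel
      map_smul' := by
        intro r e
        simp only [map_smul, Pi.smul_apply, smul_eq_mul, RingHom.id_apply, smul_add,
          Finset.smul_sum, smul_smul] }
  have hT0X : ∀ e : ↥E, T0 e ∈ Xs := by
    intro e
    refine Submodule.add_mem _ ?_ ?_
    · exact Submodule.sum_mem _ fun i _ => Submodule.smul_mem _ _ (hdX i)
    · exact Submodule.sum_mem _ fun j _ => Submodule.smul_mem _ _ (hwX j)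
  refine ⟨LinearMap.codRestrict Xs T0 hT0X, ?_, ?_⟩
  · -- identity on E ∩ X
    intro e he
    have heXE : e ∈ XE := by
      rw [hXE, Submodule.mem_comap]
      exact he
    have hpCe : pC e = 0 := Submodule.projectionOnto_apply_of_mem_right hcompl.symm heXE
    have hpXe : pX e = ⟨e, heXE⟩ := by
      have h' := Submodule.projectionOnto_apply_left hcompl (⟨e, heXE⟩ : XE)
      exact h'
    have htv0 : tv e = 0 := by
      show yB.equivFun (pC e) = 0
      rw [hpCe, map_zero]
    show T0 e = (e : Y)
    show (∑ i, av e i • d i + ∑ j, tv e j • w j) = (e : Y)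
    rw [htv0]
    simp only [Pi.zero_apply, zero_smul, Finset.sum_const_zero, add_zero]
    rw [← hsum1 e, hpXe]
  · -- norm bound
    intro e
    have hnorm_eq : ‖LinearMap.codRestrict Xs T0 hT0X e‖ = ‖T0 e‖ := rfl
    rw [hnorm_eq]
    set A : Fin k → ℝ := av e with hA
    set tt : Fin m → ℝ := tv e with htt
    set b : Fin K0 → ℝ := fun q => ∑ i, A i * R i q with hb
    have hAn : ‖A‖ ≤ C * ‖e‖ := hCa e
    have htn : ‖tt‖ ≤ C * ‖e‖ := hCt e
    have hswap : ∑ q, b q • g q = ∑ i, A i • x i := by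
      have h1 : ∀ q, b q • g q = ∑ i, (A i * R i q) • g q := by
        intro q
        rw [hb]
        rw [Finset.sum_smul]
      rw [Finset.sum_congr rfl fun q _ => h1 q, Finset.sum_comm]
      refine Finset.sum_congr rfl fun i _ => ?_
      rw [← hR i, Finset.smul_sum]
      exact Finset.sum_congr rfl fun q _ => by rw [mul_smul]
    have hdiff : ‖∑ i, A i • d i - ∑ i, A i • x i‖ ≤ k * σ * (C * ‖e‖) := by
      rw [← Finset.sum_sub_distrib]
      have h1 : ∀ i ∈ Finset.univ, ‖A i • d i - A i • x i‖ ≤ σ * (C * ‖e‖) := by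
        intro i _
        rw [← smul_sub, norm_smul, Real.norm_eq_abs]
        have h2 : ‖d i - x i‖ ≤ σ := by
          have := hxclose i
          rw [dist_eq_norm] at this
          exact this.le
        have h3 : |A i| ≤ C * ‖e‖ := le_trans (norm_le_pi_norm A i) hAn
        have h4 : (0:ℝ) ≤ |A i| := abs_nonneg _
        nlinarith
      calc ‖∑ i, (A i • d i - A i • x i)‖ ≤ ∑ i, ‖A i • d i - A i • x i‖ :=
            norm_sum_le _ _
        _ ≤ ∑ _i : Fin k, σ * (C * ‖e‖) := Finset.sum_le_sum h1
        _ = k * σ * (C * ‖e‖) := by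
            rw [Finset.sum_const, Finset.card_univ, Fintype.card_fin]
            ring
    have hbn : ‖b‖ ≤ Mb * (C * ‖e‖) := by
      have hnn : (0:ℝ) ≤ Mb * (C * ‖e‖) := by positivity
      rw [pi_norm_le_iff_of_nonneg hnn]
      intro q
      have h1 : ‖b q‖ ≤ ∑ i, |A i| * |R i q| := by
        rw [hb, Real.norm_eq_abs]
        calc |∑ i, A i * R i q| ≤ ∑ i, |A i * R i q| := Finset.abs_sum_le_sum_abs _ _
          _ = ∑ i, |A i| * |R i q| := Finset.sum_congr rfl fun i _ => abs_mul _ _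
      have h2 : ∑ i, |A i| * |R i q| ≤ ∑ i, (C * ‖e‖) * |R i q| := by
        refine Finset.sum_le_sum fun i _ => ?_
        have h3 : |A i| ≤ C * ‖e‖ := le_trans (norm_le_pi_norm A i) hAn
        have h4 : (0:ℝ) ≤ |R i q| := abs_nonneg _
        nlinarith
      have h5 : ∑ i, (C * ‖e‖) * |R i q| = (C * ‖e‖) * ∑ i, |R i q| := by
        rw [Finset.mul_sum]
      have h6 : ∑ i, |R i q| ≤ Mb := by
        rw [hMbdef]
        have h7 : ∑ i, |R i q| ≤ ∑ i, ∑ q', |R i q'| := by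
          refine Finset.sum_le_sum fun i _ => ?_
          exact Finset.single_le_sum (fun q' _ => abs_nonneg (R i q')) (Finset.mem_univ q)
        linarith
      have h8 : (0:ℝ) ≤ C * ‖e‖ := by positivity
      calc ‖b q‖ ≤ ∑ i, |A i| * |R i q| := h1
        _ ≤ (C * ‖e‖) * ∑ i, |R i q| := by rw [← h5] at *; linarith
        _ ≤ (C * ‖e‖) * Mb := by nlinarith
        _ = Mb * (C * ‖e‖) := by ring
    have hmaxbt : max ‖b‖ ‖tt‖ ≤ M * ‖e‖ := by
      rw [hMdef]
      refine max_le ?_ ?_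
      · calc ‖b‖ ≤ Mb * (C * ‖e‖) := hbn
          _ ≤ (Mb + 1) * C * ‖e‖ := by nlinarith [mul_nonneg hC.le (norm_nonneg e)]
      · calc ‖tt‖ ≤ C * ‖e‖ := htn
          _ ≤ (Mb + 1) * C * ‖e‖ := by
              nlinarith [mul_nonneg (mul_nonneg hMb.le hC.le) (norm_nonneg e)]
    have habsineq := hwp b tt
    have hkey : ‖∑ q, b q • g q + ∑ j, tt j • w j‖
        ≤ ‖∑ q, b q • g q + ∑ j, tt j • yv j‖ + η * (M * ‖e‖) := by
      have h1 := abs_sub_le_iff.1 habsineq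
      have h2 : η * max ‖b‖ ‖tt‖ ≤ η * (M * ‖e‖) :=
        mul_le_mul_of_nonneg_left hmaxbt hη.le
      linarith [h1.1]
    -- assemble
    have hTe : T0 e = ∑ i, A i • d i + ∑ j, tt j • w j := rfl
    have he_eq : (e : Y) = ∑ i, A i • d i + ∑ j, tt j • yv j := hdecomp e
    have hne : ‖(e : Y)‖ = ‖e‖ := rfl
    have step1 : ‖T0 e‖ ≤ ‖∑ q, b q • g q + ∑ j, tt j • w j‖ + k * σ * (C * ‖e‖) := by
      rw [hTe, hswap]
      calc ‖∑ i, A i • d i + ∑ j, tt j • w j‖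
          = ‖(∑ i, A i • x i + ∑ j, tt j • w j) + (∑ i, A i • d i - ∑ i, A i • x i)‖ := by
            congr 1
            abel
        _ ≤ ‖∑ i, A i • x i + ∑ j, tt j • w j‖ + ‖∑ i, A i • d i - ∑ i, A i • x i‖ :=
            norm_add_le _ _
        _ ≤ ‖∑ i, A i • x i + ∑ j, tt j • w j‖ + k * σ * (C * ‖e‖) := by linarith [hdiff]
    have step2 : ‖∑ q, b q • g q + ∑ j, tt j • yv j‖ ≤ ‖e‖ + k * σ * (C * ‖e‖) := by
      rw [hswap]
      calc ‖∑ i, A i • x i + ∑ j, tt j • yv j‖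
          = ‖((e : Y)) + (∑ i, A i • x i - ∑ i, A i • d i)‖ := by
            rw [he_eq]
            congr 1
            abel
        _ ≤ ‖(e : Y)‖ + ‖∑ i, A i • x i - ∑ i, A i • d i‖ := norm_add_le _ _
        _ ≤ ‖e‖ + k * σ * (C * ‖e‖) := by
            rw [hne, ← norm_neg (∑ i, A i • x i - ∑ i, A i • d i)]
            have : -(∑ i, A i • x i - ∑ i, A i • d i) = ∑ i, A i • d i - ∑ i, A i • x i := by
              abel
            rw [this]
            linarith [hdiff]
    have htotal : ‖T0 e‖ ≤ ‖e‖ + 2 * (k * σ * (C * ‖e‖)) + η * (M * ‖e‖) := by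
      linarith [step1, hkey, step2]
    -- final arithmetic
    have harith1 : k * σ * C ≤ ε / 4 := by
      rw [hσdef]
      have h8 : (0:ℝ) < 8 * (↑k + 1) * C := by positivity
      have heq : ↑k * (ε / (8 * (↑k + 1) * C)) * C = ε * (↑k * C) / (8 * (↑k + 1) * C) := by
        ring
      rw [heq, div_le_div_iff₀ h8 (by norm_num : (0:ℝ) < 4)]
      nlinarith [mul_nonneg (mul_nonneg hε.le (Nat.cast_nonneg (α := ℝ) k)) hC.le,
        mul_nonneg hε.le hC.le]
    have harith2 : η * M = ε / 2 := by
      rw [hηdef]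
      field_simp
    have hne0 : (0:ℝ) ≤ ‖e‖ := norm_nonneg e
    have hfin : ‖e‖ + 2 * (k * σ * (C * ‖e‖)) + η * (M * ‖e‖) ≤ (1 + ε) * ‖e‖ := by
      have h1 : 2 * (k * σ * (C * ‖e‖)) = (2 * (k * σ * C)) * ‖e‖ := by ring
      have h2 : η * (M * ‖e‖) = (η * M) * ‖e‖ := by ring
      rw [h1, h2, harith2]
      nlinarith [harith1]
    linarith [htotal, hfin]

end Aux

theorem diameterTwo_of_separable_ideals
    (Y : Type*) [NormedAddCommGroup Y] [NormedSpace ℝ Y] [CompleteSpace Y]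
    (hY : ¬ FiniteDimensional ℝ Y)
    (h : ∀ X : Subspace ℝ Y, IsClosed (X : Set Y) → ¬ FiniteDimensional ℝ X →
      TopologicalSpace.SeparableSpace X → IsIdeal X → HasDiameterTwoProperty X) :
    HasDiameterTwoProperty Y := by
  intro U hUne hUV
  obtain ⟨V, hVopen, hUeq⟩ := hUV
  obtain ⟨y0, hy0U⟩ := hUne
  have hy0V : y0 ∈ V := (hUeq ▸ hy0U).1
  have hy0B : y0 ∈ closedBall (0 : Y) 1 := (hUeq ▸ hy0U).2
  -- upper bound for the diameter
  have hUsub : U ⊆ closedBall (0 : Y) 1 := by rw [hUeq]; exact Set.inter_subset_right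
  have hUbd : Bornology.IsBounded U := Metric.isBounded_closedBall.subset hUsub
  have hdiam_le : Metric.diam U ≤ 2 := by
    refine Metric.diam_le_of_forall_dist_le (by norm_num) ?_
    intro a ha b hb
    have ha' := mem_closedBall.1 (hUsub ha)
    have hb' := mem_closedBall.1 (hUsub hb)
    calc dist a b ≤ dist a 0 + dist 0 b := dist_triangle _ _ _
      _ ≤ 1 + 1 := by rw [dist_comm (0:Y) b]; exact add_le_add ha' hb'
      _ = 2 := by norm_num
  -- extract a finite family of functionals describing a weak neighborhood
  obtain ⟨O, hOopen, hOV⟩ := isOpen_induced_iff.1 hVopen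
  have hy0O' := hOV.symm ▸ hy0V
  obtain ⟨I, uO, huO, hpiO⟩ := isOpen_pi_iff.1 hOopen _ (Set.mem_preimage.1 hy0O')
  have hδ : ∀ f ∈ I, ∃ δ : ℝ, 0 < δ ∧ Metric.ball (f y0) δ ⊆ uO f := by
    intro f hf
    exact Metric.isOpen_iff.1 (huO f hf).1 _ (huO f hf).2
  classical
  choose! δ hδpos hδball using hδ
  -- the separable ideal containing y0
  obtain ⟨useq, huseq⟩ := exists_nat_linearIndependent hY
  have hS₀c : ({y0} ∪ Set.range useq : Set Y).Countable :=
    (Set.countable_singleton y0).union (Set.countable_range useq)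
  obtain ⟨X, hXclosed, hXsep, hS₀X, hXideal⟩ := exists_separable_ideal _ hS₀c
  have hy0X : y0 ∈ X := hS₀X (Set.mem_union_left _ rfl)
  have huX : ∀ n, useq n ∈ X := fun n => hS₀X (Set.mem_union_right _ ⟨n, rfl⟩)
  have hXnfd : ¬ FiniteDimensional ℝ X := not_finiteDimensional_of_indep X useq huseq huX
  -- the relatively weakly open subset of B_X
  let VX : Set ↥X := ⋂ f ∈ I, (fun x : ↥X => f (x : Y)) ⁻¹' Metric.ball (f y0) (δ f)
  have hVXopen : @IsOpen (WeakSpace ℝ ↥X) _ VX := by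
    refine isOpen_biInter_finset fun f hf => ?_
    have hcont : Continuous fun x : WeakSpace ℝ ↥X => f.comp X.subtypeL x :=
      WeakBilin.eval_continuous ((topDualPairing ℝ ↥X).flip) (f.comp X.subtypeL)
    exact hcont.isOpen_preimage _ Metric.isOpen_ball
  let UX : Set ↥X := VX ∩ closedBall (0 : ↥X) 1
  have hx0 : (⟨y0, hy0X⟩ : ↥X) ∈ UX := by
    constructor
    · refine Set.mem_iInter₂.2 fun f hf => ?_
      show f y0 ∈ Metric.ball (f y0) (δ f)
      exact Metric.mem_ball_self (hδpos f hf)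
    · show (⟨y0, hy0X⟩ : ↥X) ∈ closedBall 0 1
      rw [Metric.mem_closedBall, Subtype.dist_eq]
      simpa using Metric.mem_closedBall.1 hy0B
  have hdiamX : Metric.diam UX = 2 :=
    h X hXclosed hXnfd hXsep hXideal UX ⟨_, hx0⟩ ⟨VX, hVXopen, rfl⟩
  -- transfer back
  have hiso : Isometry ((↑) : ↥X → Y) := isometry_subtype_coe
  have himg : Subtype.val '' UX ⊆ U := by
    rintro _ ⟨x, hx, rfl⟩
    rw [hUeq]
    constructor
    · rw [← hOV]
      refine hpiO ?_
      intro f hf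
      have hx' := Set.mem_iInter₂.1 hx.1 f hf
      exact hδball f hf hx'
    · have hx2' := Metric.mem_closedBall.1 hx.2
      rw [Subtype.dist_eq] at hx2'
      rw [Metric.mem_closedBall]
      simpa using hx2'
  have hge : (2:ℝ) ≤ Metric.diam U := by
    have h1 : Metric.diam (Subtype.val '' UX) = Metric.diam UX := hiso.diam_image UX
    have h2 := Metric.diam_mono himg hUbd
    rw [h1, hdiamX] at h2
    exact h2
  linarith
end

section
/- Let X be a non-trivial Banach space. Then X has the Daugavet property if and only if for every y in the unit sphere S_X, every x* in the unit sphere S_{X*} and every ε > 0 there exists x ∈ S_X such that x*(x) ≥ 1 − ε and ‖x + y‖ ≥ 2 − ε. -/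
universe u v

open Metric Set

section DaugavetAux

variable {X : Type*} [NormedAddCommGroup X] [NormedSpace ℝ X]

private lemma daugavet_step1 (y x : X) (lam δ : ℝ) (hy : ‖y‖ = 1) (hx1 : ‖x‖ = 1)
    (hlam : 0 ≤ lam) (hδ : 0 ≤ δ) (hx3 : 2 - δ ≤ ‖x + y‖) :
    1 + lam - (1 + lam) * δ ≤ ‖x + lam • y‖ := by
  rcases le_or_gt lam 1 with hl | hl
  · have : ‖x + y‖ ≤ ‖x + lam • y‖ + (1 - lam) := by
      calc ‖x + y‖ = ‖(x + lam • y) + (1 - lam) • y‖ := by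
            congr 1; rw [sub_smul, one_smul]; abel
        _ ≤ ‖x + lam • y‖ + ‖(1 - lam) • y‖ := norm_add_le _ _
        _ = ‖x + lam • y‖ + (1 - lam) := by
            rw [norm_smul, hy, mul_one, Real.norm_eq_abs, abs_of_nonneg (by linarith)]
    nlinarith [mul_nonneg hlam hδ]
  · have : lam * ‖x + y‖ ≤ ‖x + lam • y‖ + (lam - 1) := by
      calc lam * ‖x + y‖ = ‖lam • (x + y)‖ := by
            rw [norm_smul, Real.norm_eq_abs, abs_of_nonneg (by linarith)]
        _ = ‖(x + lam • y) + (lam - 1) • x‖ := by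
            congr 1; rw [smul_add, sub_smul, one_smul]; abel
        _ ≤ ‖x + lam • y‖ + ‖(lam - 1) • x‖ := norm_add_le _ _
        _ = ‖x + lam • y‖ + (lam - 1) := by
            rw [norm_smul, hx1, mul_one, Real.norm_eq_abs, abs_of_nonneg (by linarith)]
    nlinarith

private lemma daugavet_bwd_aux [Nontrivial X]
    (H : ∀ y : X, ‖y‖ = 1 → ∀ g : X →L[ℝ] ℝ, ‖g‖ = 1 → ∀ ε : ℝ, 0 < ε →
        ∃ x : X, ‖x‖ = 1 ∧ 1 - ε ≤ g x ∧ 2 - ε ≤ ‖x + y‖)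
    (y : X) (hy : ‖y‖ = 1) (g : X →L[ℝ] ℝ) (hg0 : g ≠ 0) :
    ‖ContinuousLinearMap.id ℝ X + g.smulRight y‖ = 1 + ‖g‖ := by
  have hgpos : (0:ℝ) < ‖g‖ := norm_pos_iff.mpr hg0
  have hh : ‖(‖g‖⁻¹ • g : X →L[ℝ] ℝ)‖ = 1 := norm_smul_inv_norm hg0
  refine le_antisymm ?_ ?_
  · calc ‖ContinuousLinearMap.id ℝ X + g.smulRight y‖
        ≤ ‖ContinuousLinearMap.id ℝ X‖ + ‖g.smulRight y‖ := norm_add_le _ _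
      _ = 1 + ‖g‖ := by
          rw [ContinuousLinearMap.norm_id, ContinuousLinearMap.norm_smulRight_apply, hy, mul_one]
  · apply le_of_forall_sub_le
    intro ε hε
    have hden : (0:ℝ) < 1 + 2 * ‖g‖ := by positivity
    have hδpos : 0 < ε / (1 + 2 * ‖g‖) := div_pos hε hden
    obtain ⟨x, hx1, hx2, hx3⟩ := H y hy (‖g‖⁻¹ • g) hh _ hδpos
    set δ : ℝ := ε / (1 + 2 * ‖g‖) with hδdef
    have hhx1 : (‖g‖⁻¹ • g : X →L[ℝ] ℝ) x ≤ 1 := by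
      calc (‖g‖⁻¹ • g : X →L[ℝ] ℝ) x ≤ |(‖g‖⁻¹ • g : X →L[ℝ] ℝ) x| := le_abs_self _
        _ = ‖(‖g‖⁻¹ • g : X →L[ℝ] ℝ) x‖ := rfl
        _ ≤ ‖(‖g‖⁻¹ • g : X →L[ℝ] ℝ)‖ * ‖x‖ := ContinuousLinearMap.le_opNorm _ x
        _ = 1 := by rw [hh, hx1, mul_one]
    have hgx : g x = ‖g‖ * (‖g‖⁻¹ • g : X →L[ℝ] ℝ) x := by
      rw [ContinuousLinearMap.smul_apply, smul_eq_mul, ← mul_assoc,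
        mul_inv_cancel₀ hgpos.ne', one_mul]
    have hhx2 : 1 - δ ≤ (‖g‖⁻¹ • g : X →L[ℝ] ℝ) x := hx2
    have step1 : 1 + ‖g‖ - (1 + ‖g‖) * δ ≤ ‖x + ‖g‖ • y‖ :=
      daugavet_step1 y x ‖g‖ δ hy hx1 hgpos.le hδpos.le hx3
    have step2 : ‖x + ‖g‖ • y‖ - ‖g‖ * δ ≤ ‖x + g x • y‖ := by
      have : ‖x + ‖g‖ • y‖ ≤ ‖x + g x • y‖ + ‖g‖ * (1 - (‖g‖⁻¹ • g : X →L[ℝ] ℝ) x) := by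
        calc ‖x + ‖g‖ • y‖ = ‖(x + g x • y) + (‖g‖ - g x) • y‖ := by
              congr 1; rw [sub_smul]; abel
          _ ≤ ‖x + g x • y‖ + ‖(‖g‖ - g x) • y‖ := norm_add_le _ _
          _ = ‖x + g x • y‖ + ‖g‖ * (1 - (‖g‖⁻¹ • g : X →L[ℝ] ℝ) x) := by
              rw [norm_smul, hy, mul_one, Real.norm_eq_abs, hgx,
                abs_of_nonneg (by nlinarith)]
              ring
      nlinarith [hgpos.le]
    have hfinal : 1 + ‖g‖ - ε ≤ ‖x + g x • y‖ := by
      have hδmul : (1 + 2 * ‖g‖) * δ = ε := by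
        rw [hδdef]; field_simp
      nlinarith [hgpos.le]
    have happ : (ContinuousLinearMap.id ℝ X + g.smulRight y) x = x + g x • y := rfl
    calc 1 + ‖g‖ - ε ≤ ‖x + g x • y‖ := hfinal
      _ = ‖(ContinuousLinearMap.id ℝ X + g.smulRight y) x‖ := by rw [happ]
      _ ≤ ‖ContinuousLinearMap.id ℝ X + g.smulRight y‖ :=
          (ContinuousLinearMap.id ℝ X + g.smulRight y).unit_le_opNorm x hx1.le

end DaugavetAux

theorem daugavet_iff_slice_condition
    (X : Type*) [NormedAddCommGroup X] [NormedSpace ℝ X] [CompleteSpace X] [Nontrivial X] :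
    HasDaugavetProperty X ↔
      ∀ y : X, ‖y‖ = 1 → ∀ g : X →L[ℝ] ℝ, ‖g‖ = 1 → ∀ ε : ℝ, 0 < ε →
        ∃ x : X, ‖x‖ = 1 ∧ 1 - ε ≤ g x ∧ 2 - ε ≤ ‖x + y‖ := by
  constructor
  · intro hD y hy g hg ε hε
    set δ : ℝ := min (ε / 3) (1 / 2) with hδdef
    have hδpos : 0 < δ := lt_min (by linarith) (by norm_num)
    have hδhalf : δ ≤ 1 / 2 := min_le_right _ _
    have hδε : 3 * δ ≤ ε := by
      have := min_le_left (ε / 3) (1 / 2); simp only [← hδdef] at this; linarith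
    set T : X →L[ℝ] X := g.smulRight y with hT
    have hy0 : y ≠ 0 := by intro h; rw [h, norm_zero] at hy; norm_num at hy
    have hrange : LinearMap.range (T : X →ₗ[ℝ] X) = Submodule.span ℝ {y} := by
      apply le_antisymm
      · rintro z ⟨x, rfl⟩
        exact Submodule.smul_mem _ _ (Submodule.mem_span_singleton_self y)
      · rw [Submodule.span_singleton_le_iff_mem]
        obtain ⟨x, hx⟩ : ∃ x, g x ≠ 0 := by
          by_contra h; push_neg at h
          have : g = 0 := ContinuousLinearMap.ext fun x => h x
          rw [this, norm_zero] at hg; norm_num at hg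
        refine ⟨(g x)⁻¹ • x, ?_⟩
        show g ((g x)⁻¹ • x) • y = y
        rw [map_smul, smul_eq_mul, inv_mul_cancel₀ hx, one_smul]
    have hrank : Module.finrank ℝ (LinearMap.range (T : X →ₗ[ℝ] X)) = 1 := by
      rw [hrange]; exact finrank_span_singleton hy0
    have hTnorm : ‖T‖ = 1 := by
      rw [hT, ContinuousLinearMap.norm_smulRight_apply, hg, hy, mul_one]
    have hIT : ‖ContinuousLinearMap.id ℝ X + T‖ = 2 := by
      rw [hD T hrank, hTnorm]; norm_num
    obtain ⟨x₀, hx₀, hx₀2⟩ := (ContinuousLinearMap.id ℝ X + T).exists_lt_apply_of_lt_opNorm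
      (r := 2 - δ) (by rw [hIT]; linarith)
    -- WLOG g x₀ ≥ 0
    obtain ⟨x, hx1, hgx0, hx2⟩ : ∃ x : X, ‖x‖ < 1 ∧ 0 ≤ g x ∧ 2 - δ < ‖x + g x • y‖ := by
      have happ : ∀ z : X, (ContinuousLinearMap.id ℝ X + T) z = z + g z • y := fun z => rfl
      rcases le_or_gt 0 (g x₀) with h | h
      · exact ⟨x₀, hx₀, h, by rw [happ] at hx₀2; exact hx₀2⟩
      · refine ⟨-x₀, by simpa using hx₀, by simp; linarith, ?_⟩
        rw [happ] at hx₀2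
        rw [map_neg]
        calc 2 - δ < ‖x₀ + g x₀ • y‖ := hx₀2
          _ = ‖-x₀ + -g x₀ • y‖ := by rw [neg_smul, ← neg_add, norm_neg]
    have hgx1 : g x ≤ 1 := by
      calc g x ≤ |g x| := le_abs_self _
        _ = ‖g x‖ := rfl
        _ ≤ ‖g‖ * ‖x‖ := g.le_opNorm x
        _ ≤ 1 := by rw [hg, one_mul]; exact hx1.le
    have hgxge : 1 - δ ≤ g x := by
      have : ‖x + g x • y‖ ≤ ‖x‖ + g x := by
        calc ‖x + g x • y‖ ≤ ‖x‖ + ‖g x • y‖ := norm_add_le _ _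
          _ = ‖x‖ + g x := by rw [norm_smul, hy, mul_one, Real.norm_eq_abs, abs_of_nonneg hgx0]
      linarith [hx1]
    have hxge : 1 - δ ≤ ‖x‖ := by
      have : ‖x + g x • y‖ ≤ ‖x‖ + g x := by
        calc ‖x + g x • y‖ ≤ ‖x‖ + ‖g x • y‖ := norm_add_le _ _
          _ = ‖x‖ + g x := by rw [norm_smul, hy, mul_one, Real.norm_eq_abs, abs_of_nonneg hgx0]
      linarith
    have hxy : 2 - 2 * δ ≤ ‖x + y‖ := by
      have : ‖x + g x • y‖ ≤ ‖x + y‖ + (1 - g x) := by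
        calc ‖x + g x • y‖ = ‖(x + y) - (1 - g x) • y‖ := by
              congr 1; rw [sub_smul, one_smul]; abel
          _ ≤ ‖x + y‖ + ‖(1 - g x) • y‖ := norm_sub_le _ _
          _ = ‖x + y‖ + (1 - g x) := by
              rw [norm_smul, hy, mul_one, Real.norm_eq_abs, abs_of_nonneg (by linarith)]
      linarith
    -- normalize x
    have hxpos : 0 < ‖x‖ := by linarith
    refine ⟨‖x‖⁻¹ • x, ?_, ?_, ?_⟩
    · rw [norm_smul, norm_inv, norm_norm, inv_mul_cancel₀ hxpos.ne']
    · have h1 : (1 : ℝ) ≤ ‖x‖⁻¹ := (one_le_inv₀ hxpos).2 hx1.le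
      have : g x ≤ ‖x‖⁻¹ * g x := le_mul_of_one_le_left hgx0 h1
      rw [map_smul, smul_eq_mul]
      linarith
    · have hdist : ‖‖x‖⁻¹ • x - x‖ = 1 - ‖x‖ := by
        have : ‖x‖⁻¹ • x - x = (‖x‖⁻¹ - 1) • x := by rw [sub_smul, one_smul]
        rw [this, norm_smul, Real.norm_eq_abs,
          abs_of_nonneg (by linarith [(one_le_inv₀ hxpos).2 hx1.le]),
          sub_mul, inv_mul_cancel₀ hxpos.ne', one_mul]
      have : ‖x + y‖ ≤ ‖‖x‖⁻¹ • x + y‖ + (1 - ‖x‖) := by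
        calc ‖x + y‖ = ‖(‖x‖⁻¹ • x + y) - (‖x‖⁻¹ • x - x)‖ := by congr 1; abel
          _ ≤ ‖‖x‖⁻¹ • x + y‖ + ‖‖x‖⁻¹ • x - x‖ := norm_sub_le _ _
          _ = ‖‖x‖⁻¹ • x + y‖ + (1 - ‖x‖) := by rw [hdist]
      linarith
  · intro H T hT
    haveI : Module.Free ℝ ↥(LinearMap.range (T : X →ₗ[ℝ] X)) :=
      Module.Free.of_divisionRing ℝ _
    obtain ⟨v, hv0, hv⟩ := finrank_eq_one_iff'.mp hT
    have hy₀0 : (v : X) ≠ 0 := fun h => hv0 (Subtype.ext h)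
    obtain ⟨f, hf1, hfy₀⟩ := exists_dual_vector ℝ (v : X) (norm_ne_zero_iff.mpr hy₀0)
    have hfy : f (v : X) = ‖(v : X)‖ := by exact_mod_cast hfy₀
    have hy₀pos : (0:ℝ) < ‖(v : X)‖ := norm_pos_iff.mpr hy₀0
    have hy : ‖(‖(v : X)‖⁻¹ • (v : X))‖ = 1 := norm_smul_inv_norm hy₀0
    have hTx : ∀ x : X, T x = (f.comp T) x • (‖(v : X)‖⁻¹ • (v : X)) := by
      intro x
      obtain ⟨c, hc⟩ := hv ⟨T x, LinearMap.mem_range.mpr ⟨x, rfl⟩⟩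
      have hcx : T x = c • (v : X) := by
        have := congrArg (Subtype.val) hc; exact this.symm
      have hgx : (f.comp T) x = c * ‖(v : X)‖ := by
        show f (T x) = c * ‖(v : X)‖
        rw [hcx, map_smul, smul_eq_mul, hfy]
      rw [hcx, hgx, smul_smul, mul_assoc, mul_inv_cancel₀ hy₀pos.ne', mul_one]
    have hTg : T = (f.comp T).smulRight (‖(v : X)‖⁻¹ • (v : X)) := by
      ext x; rw [hTx x]; rfl
    have hg0 : f.comp T ≠ 0 := by
      intro h
      have hT0 : T = 0 := by
        ext x; rw [hTx x, h]; simp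
      rw [hT0] at hT
      have : LinearMap.range ((0 : X →L[ℝ] X) : X →ₗ[ℝ] X) = ⊥ := LinearMap.range_eq_bot.mpr rfl
      rw [this] at hT
      simp at hT
    have hTnorm : ‖T‖ = ‖f.comp T‖ := by
      conv_lhs => rw [hTg]
      rw [ContinuousLinearMap.norm_smulRight_apply, hy, mul_one]
    rw [hTnorm]
    conv_lhs => rw [hTg]
    exact daugavet_bwd_aux H _ hy _ hg0
end

section
/- Let X be a non-trivial closed subspace of a Banach space Y such that X is a super-ideal in Y. If Y has the Daugavet property, then X has the Daugavet property. -/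
universe u v

open Metric Set

section AuxLemmas

open Filter Topology


variable {Y : Type*} [NormedAddCommGroup Y] [NormedSpace ℝ Y]

/-- Rank-one decomposition of a continuous linear operator. -/
lemma rankOne_decomp {Z : Type*} [NormedAddCommGroup Z] [NormedSpace ℝ Z]
    (T : Z →L[ℝ] Z) (hT : Module.finrank ℝ (LinearMap.range (T : Z →ₗ[ℝ] Z)) = 1) :
    ∃ (f : Z →L[ℝ] ℝ) (x : Z), x ≠ 0 ∧ f ≠ 0 ∧ T = f.smulRight x := by
  haveI : Module.Free ℝ (LinearMap.range (T : Z →ₗ[ℝ] Z)) :=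
    Module.Free.of_divisionRing _ _
  rw [finrank_eq_one_iff'] at hT
  obtain ⟨v, hv0, hv⟩ := hT
  set x : Z := (v : Z) with hxdef
  have hx0 : x ≠ 0 := by
    simpa [hxdef, Submodule.coe_eq_zero] using hv0
  have hmem : ∀ z : Z, T z ∈ LinearMap.range (T : Z →ₗ[ℝ] Z) :=
    fun z => LinearMap.mem_range_self _ z
  choose c hc using fun z => hv ⟨T z, hmem z⟩
  have hcz : ∀ z, c z • x = T z := by
    intro z
    have := congrArg (Subtype.val) (hc z)
    simpa using this
  have uniq : ∀ a b : ℝ, a • x = b • x → a = b := by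
    intro a b hab
    have : (a - b) • x = 0 := by rw [sub_smul, hab, sub_self]
    rcases smul_eq_zero.1 this with h | h
    · linarith [sub_eq_zero.1 (by linarith [h] : a - b = 0)]
    · exact absurd h hx0
  have hadd : ∀ z w, c (z + w) = c z + c w := by
    intro z w
    apply uniq
    rw [hcz, add_smul, hcz, hcz, map_add]
  have hsmul : ∀ (a : ℝ) z, c (a • z) = a * c z := by
    intro a z
    apply uniq
    rw [hcz, mul_smul, hcz, map_smul]
  set f0 : Z →ₗ[ℝ] ℝ :=
    { toFun := c
      map_add' := hadd
      map_smul' := hsmul } with hf0def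
  have hxpos : 0 < ‖x‖ := norm_pos_iff.2 hx0
  have hbound : ∀ z, ‖f0 z‖ ≤ (‖T‖ / ‖x‖) * ‖z‖ := by
    intro z
    have h1 : ‖c z • x‖ = ‖T z‖ := by rw [hcz]
    have h2 : |c z| * ‖x‖ = ‖T z‖ := by
      rw [← h1, norm_smul, Real.norm_eq_abs]
    have h3 : ‖T z‖ ≤ ‖T‖ * ‖z‖ := T.le_opNorm z
    have h4 : |c z| = ‖T z‖ / ‖x‖ := by rw [eq_div_iff hxpos.ne']; exact h2
    rw [show ‖f0 z‖ = |c z| from rfl, h4, div_le_iff₀ hxpos]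
    calc ‖T z‖ ≤ ‖T‖ * ‖z‖ := h3
      _ = ‖T‖ / ‖x‖ * ‖z‖ * ‖x‖ := by field_simp
  set f : Z →L[ℝ] ℝ := LinearMap.mkContinuous f0 (‖T‖ / ‖x‖) hbound with hfdef
  have hTf : T = f.smulRight x := by
    ext z
    rw [ContinuousLinearMap.smulRight_apply]
    rw [show f z = c z from rfl, hcz]
  refine ⟨f, x, hx0, ?_, hTf⟩
  obtain ⟨z0, hz0⟩ := v.2
  have hz0' : T z0 = x := by simpa using hz0
  have : c z0 • x = x := by rw [hcz, hz0']
  have h1 : c z0 = 1 := uniq _ _ (by rw [this, one_smul])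
  intro h
  have : f z0 = 0 := by rw [h]; rfl
  rw [show f z0 = c z0 from rfl, h1] at this
  exact one_ne_zero this



variable {Y : Type*} [NormedAddCommGroup Y] [NormedSpace ℝ Y]

lemma exists_good_extension (X : Subspace ℝ Y) (hX : IsSuperIdeal X) (f : X →L[ℝ] ℝ) :
    ∃ g : Y →L[ℝ] ℝ, (∀ x : X, g (x : Y) = f x) ∧
      ∀ δ : ℝ, 0 < δ → ∀ s : Finset Y, ∀ y : Y,
        ∃ (E : Subspace ℝ Y) (S : E →ₗ[ℝ] X) (hy : y ∈ E),
          (∀ e : E, (e : Y) ∈ X → ((S e : X) : Y) = (e : Y)) ∧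
          (∀ e : E, (1 + δ)⁻¹ * ‖e‖ ≤ ‖S e‖ ∧ ‖S e‖ ≤ (1 + δ) * ‖e‖) ∧
          (↑s : Set Y) ⊆ (E : Set Y) ∧ |f (S ⟨y, hy⟩) - g y| < δ := by
  classical
  let Esp : Finset Y × ℕ → Subspace ℝ Y := fun i => Submodule.span ℝ (i.1 : Set Y)
  haveI hfd : ∀ i, FiniteDimensional ℝ (Esp i) := fun i =>
    FiniteDimensional.span_finset ℝ i.1
  let eps : Finset Y × ℕ → ℝ := fun i => 1 / (i.2 + 1)
  have heps : ∀ i, 0 < eps i := fun i => by positivity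
  have heps1 : ∀ i, eps i ≤ 1 := by
    intro i
    rw [div_le_one (by positivity)]
    exact_mod_cast Nat.le_add_left 1 i.2
  choose S hSfix hSnorm using fun i => hX (eps i) (heps i) (Esp i) (hfd i)
  let φ : ∀ i, Esp i →L[ℝ] ℝ := fun i =>
    LinearMap.toContinuousLinearMap (f.toLinearMap ∘ₗ S i)
  have hφ : ∀ i (e : Esp i), φ i e = f (S i e) := fun i e => rfl
  have hφnorm : ∀ i, ‖φ i‖ ≤ 2 * ‖f‖ := by
    intro i
    apply ContinuousLinearMap.opNorm_le_bound _ (by positivity)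
    intro e
    calc ‖φ i e‖ = ‖f (S i e)‖ := by rw [hφ]
      _ ≤ ‖f‖ * ‖S i e‖ := f.le_opNorm _
      _ ≤ ‖f‖ * ((1 + eps i) * ‖e‖) := by
          gcongr
          exact (hSnorm i e).2
      _ ≤ ‖f‖ * (2 * ‖e‖) := by
          gcongr
          linarith [heps1 i]
      _ = 2 * ‖f‖ * ‖e‖ := by ring
  choose h hh1 hh2 using fun i => exists_extension_norm_eq (Esp i) (φ i)
  -- Banach-Alaoglu
  have hball : ∀ i, StrongDual.toWeakDual (h i) ∈
      (WeakDual.toStrongDual ⁻¹' closedBall 0 (2 * ‖f‖) : Set (WeakDual ℝ Y)) := by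
    intro i
    simp only [mem_preimage, mem_closedBall_zero_iff]
    rw [show WeakDual.toStrongDual (StrongDual.toWeakDual (h i)) = h i from rfl]
    rw [hh2]
    exact hφnorm i
  have hcpt := WeakDual.isCompact_closedBall (𝕜 := ℝ) (E := Y) 0 (2 * ‖f‖)
  obtain ⟨gW, hgWmem, hgWcl⟩ := hcpt.exists_clusterPt
    (f := (Filter.atTop : Filter (Finset Y × ℕ)).map fun i => StrongDual.toWeakDual (h i))
    (le_principal_iff.2 (Filter.mem_map.2 (Filter.Eventually.of_forall hball)))
  set g : Y →L[ℝ] ℝ := WeakDual.toStrongDual gW with hgdef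
  have hgW : ∀ y : Y, gW y = g y := fun y => rfl
  -- cluster point extraction
  have hkey : ∀ (y : Y) (δ : ℝ), 0 < δ → ∀ i₀ : Finset Y × ℕ,
      ∃ i, i₀ ≤ i ∧ |h i y - g y| < δ := by
    intro y δ hδ i₀
    have hU : {ψ : WeakDual ℝ Y | |ψ y - gW y| < δ} ∈ 𝓝 gW := by
      have hc : Continuous fun ψ : WeakDual ℝ Y => ψ y := WeakDual.eval_continuous y
      have := hc.continuousAt (x := gW) |>.preimage_mem_nhds (ball_mem_nhds (gW y) hδ)
      refine Filter.mem_of_superset this ?_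
      intro ψ hψ
      simpa [Real.dist_eq] using hψ
    have hV : (fun i => StrongDual.toWeakDual (h i)) '' {i | i₀ ≤ i} ∈
        (Filter.atTop : Filter (Finset Y × ℕ)).map fun i => StrongDual.toWeakDual (h i) :=
      Filter.image_mem_map (Filter.mem_atTop i₀)
    obtain ⟨ψ, hψU, hψV⟩ := clusterPt_iff_nonempty.1 hgWcl hU hV
    obtain ⟨i, hi, rfl⟩ := hψV
    exact ⟨i, hi, by simpa [hgW] using hψU⟩
  have hext : ∀ x : X, g (x : Y) = f x := by
    intro x
    by_contra hne
    have hpos : 0 < |f x - g ↑x| := abs_pos.2 (sub_ne_zero.2 fun hh => hne hh.symm)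
    obtain ⟨i, hi, hlt⟩ := hkey (↑x) _ hpos ({(↑x : Y)}, 0)
    have hxE : (↑x : Y) ∈ Esp i := Submodule.subset_span (hi.1 (Finset.mem_singleton_self _))
    have hfix := hSfix i ⟨↑x, hxE⟩ x.2
    have hSx : S i ⟨↑x, hxE⟩ = x := Subtype.ext hfix
    have : h i ↑x = f x := by
      have := hh1 i ⟨↑x, hxE⟩
      rw [hφ, hSx] at this
      exact this
    rw [this] at hlt
    exact lt_irrefl _ hlt
  refine ⟨g, hext, ?_⟩
  intro δ hδ s y
  obtain ⟨N, hN⟩ := exists_nat_one_div_lt (K := ℝ) hδ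
  obtain ⟨i, hi, hlt⟩ := hkey y δ hδ (insert y s, N)
  have hyE : y ∈ Esp i := Submodule.subset_span (hi.1 (Finset.mem_insert_self y s))
  have hsE : (↑s : Set Y) ⊆ (Esp i : Set Y) := by
    intro z hz
    exact Submodule.subset_span (hi.1 (Finset.mem_insert_of_mem hz))
  have hepsδ : eps i ≤ δ := by
    have h1 : eps i ≤ 1 / (N + 1 : ℝ) := by
      apply div_le_div_of_nonneg_left one_pos.le (by positivity)
      exact_mod_cast Nat.add_le_add_right hi.2 1
    exact h1.trans hN.le
  refine ⟨Esp i, S i, hyE, hSfix i, ?_, hsE, ?_⟩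
  · intro e
    constructor
    · calc (1 + δ)⁻¹ * ‖e‖ ≤ (1 + eps i)⁻¹ * ‖e‖ := by
            apply mul_le_mul_of_nonneg_right _ (norm_nonneg _)
            apply inv_anti₀ (by linarith [heps i])
            linarith
        _ ≤ ‖S i e‖ := (hSnorm i e).1
    · calc ‖S i e‖ ≤ (1 + eps i) * ‖e‖ := (hSnorm i e).2
        _ ≤ (1 + δ) * ‖e‖ := by
            apply mul_le_mul_of_nonneg_right (by linarith) (norm_nonneg _)
  · have := hh1 i ⟨y, hyE⟩
    rw [hφ] at this
    rw [show h i y = h i (⟨y, hyE⟩ : Esp i) from rfl, this] at hlt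
    exact hlt

end AuxLemmas

set_option maxHeartbeats 1000000 in
set_option synthInstance.maxHeartbeats 400000 in
theorem superIdeal_daugavetProperty
    (Y : Type*) [NormedAddCommGroup Y] [NormedSpace ℝ Y] [CompleteSpace Y]
    (X : Subspace ℝ Y) (hXc : IsClosed (X : Set Y)) [Nontrivial X]
    (hX : IsSuperIdeal X) (hY : HasDaugavetProperty Y) :
    HasDaugavetProperty X := by
  intro T hT
  obtain ⟨f, x, hx0, hf0, hTeq⟩ := rankOne_decomp T hT
  subst hTeq
  set T : X →L[ℝ] X := f.smulRight x with hTdef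
  obtain ⟨g, hgext, hgood⟩ := exists_good_extension X hX f
  have hxpos : 0 < ‖x‖ := norm_pos_iff.2 hx0
  have hTnorm : ‖T‖ = ‖f‖ * ‖x‖ := ContinuousLinearMap.norm_smulRight_apply f x
  have hxY0 : (↑x : Y) ≠ 0 := fun hh => hx0 (by exact_mod_cast Subtype.ext hh)
  -- g is an extension, so ‖g‖ ≥ ‖f‖ and g ≠ 0
  have hfg : ‖f‖ ≤ ‖g‖ := by
    apply ContinuousLinearMap.opNorm_le_bound _ (norm_nonneg g)
    intro z
    rw [← hgext z]
    calc ‖g ↑z‖ ≤ ‖g‖ * ‖(z : Y)‖ := g.le_opNorm _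
      _ = ‖g‖ * ‖z‖ := rfl
  obtain ⟨z0, hz0⟩ : ∃ z0 : X, f z0 ≠ 0 := by
    by_contra hc
    push_neg at hc
    exact hf0 (by ext z; simpa using hc z)
  -- the rank-one operator on Y
  set R : Y →L[ℝ] Y := g.smulRight (↑x : Y) with hRdef
  have hRrank : Module.finrank ℝ (LinearMap.range (R : Y →ₗ[ℝ] Y)) = 1 := by
    have hrange : LinearMap.range (R : Y →ₗ[ℝ] Y) = Submodule.span ℝ {(↑x : Y)} := by
      apply le_antisymm
      · rintro _ ⟨y, rfl⟩
        exact Submodule.smul_mem _ _ (Submodule.mem_span_singleton_self _)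
      · rw [Submodule.span_singleton_le_iff_mem]
        refine ⟨(g ↑z0)⁻¹ • (↑z0 : Y), ?_⟩
        have hgz0 : g ↑z0 ≠ 0 := by rw [hgext z0]; exact hz0
        show R ((g ↑z0)⁻¹ • (↑z0 : Y)) = (↑x : Y)
        rw [hRdef]
        simp [ContinuousLinearMap.smulRight_apply, smul_smul, inv_mul_cancel₀ hgz0]
    rw [hrange]
    exact finrank_span_singleton hxY0
  have hRY := hY R hRrank
  have hRnorm : ‖R‖ = ‖g‖ * ‖x‖ := by
    rw [hRdef, ContinuousLinearMap.norm_smulRight_apply]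
    rfl
  have hRge : 1 + ‖T‖ ≤ ‖ContinuousLinearMap.id ℝ Y + R‖ := by
    rw [hRY, hRnorm, hTnorm]
    have := mul_le_mul_of_nonneg_right hfg (norm_nonneg x)
    linarith
  -- key estimate for each δ > 0
  have key : ∀ δ : ℝ, 0 < δ →
      (1 + δ)⁻¹ * ((1 + δ)⁻¹ * (1 + ‖T‖ - δ) - δ * ‖x‖) ≤
        ‖ContinuousLinearMap.id ℝ X + T‖ := by
    intro δ hδ
    have hδ1 : (0:ℝ) < 1 + δ := by linarith
    -- find an almost norming point for id + R
    have hlt : 1 + ‖T‖ - δ < ‖ContinuousLinearMap.id ℝ Y + R‖ := by linarith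
    obtain ⟨y, hy1, hy2⟩ := ContinuousLinearMap.exists_lt_apply_of_lt_opNorm _ hlt
    have hy2' : 1 + ‖T‖ - δ < ‖y + g y • (↑x : Y)‖ := by
      simpa [hRdef, ContinuousLinearMap.smulRight_apply] using hy2
    obtain ⟨E, S, hyE, hfix, hnorms, hsub, happrox⟩ := hgood δ hδ {(↑x : Y)} y
    have hxE : (↑x : Y) ∈ E := hsub (by simp)
    set xhat : E := ⟨↑x, hxE⟩ with hxhatdef
    set yhat : E := ⟨y, hyE⟩ with hyhatdef
    have hSx : S xhat = x := Subtype.ext (hfix xhat x.2)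
    set c : ℝ := g y with hcdef
    set w : E := yhat + c • xhat with hwdef
    have hwcoe : (↑w : Y) = y + c • (↑x : Y) := rfl
    have hwnorm : ‖w‖ = ‖y + c • (↑x : Y)‖ := by
      rw [show ‖w‖ = ‖(↑w : Y)‖ from rfl, hwcoe]
    set u : X := S yhat with hudef
    have hSw : S w = u + c • x := by
      rw [hwdef, map_add, map_smul, hSx, hudef]
    have h1 : (1 + δ)⁻¹ * (1 + ‖T‖ - δ) ≤ ‖u + c • x‖ := by
      rw [← hSw]
      calc (1 + δ)⁻¹ * (1 + ‖T‖ - δ) ≤ (1 + δ)⁻¹ * ‖w‖ := by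
            apply mul_le_mul_of_nonneg_left _ (inv_pos.2 hδ1).le
            rw [hwnorm]; linarith
        _ ≤ ‖S w‖ := (hnorms w).1
    have happrox' : |f u - c| < δ := happrox
    have h2 : (1 + δ)⁻¹ * (1 + ‖T‖ - δ) - δ * ‖x‖ ≤ ‖u + f u • x‖ := by
      have heq : u + f u • x = (u + c • x) + (f u - c) • x := by
        rw [sub_smul]; abel
      rw [heq]
      have h3 : ‖(u + c • x) + (f u - c) • x‖ ≥ ‖u + c • x‖ - ‖(f u - c) • x‖ := by
        have h5 := norm_sub_norm_le (u + c • x) (-((f u - c) • x))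
        rw [norm_neg, sub_neg_eq_add] at h5
        exact h5
      have h4 : ‖(f u - c) • x‖ ≤ δ * ‖x‖ := by
        rw [norm_smul, Real.norm_eq_abs]
        apply mul_le_mul_of_nonneg_right happrox'.le (norm_nonneg x)
      linarith
    have hu : ‖u‖ ≤ 1 + δ := by
      have h6 : ‖S yhat‖ ≤ (1 + δ) * ‖yhat‖ := (hnorms yhat).2
      have h7 : ‖yhat‖ ≤ 1 := by
        rw [show ‖yhat‖ = ‖y‖ from rfl]; exact hy1.le
      have h8 : ‖u‖ = ‖S yhat‖ := by rw [hudef]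
      nlinarith [norm_nonneg yhat]
    set u' : X := (1 + δ)⁻¹ • u with hu'def
    have hu' : ‖u'‖ ≤ 1 := by
      have h9 : ‖u'‖ = (1 + δ)⁻¹ * ‖u‖ := by
        rw [hu'def, norm_smul, Real.norm_eq_abs, abs_of_pos (inv_pos.2 hδ1)]
      rw [h9, inv_mul_le_iff₀ hδ1, mul_one]
      exact hu
    have happ : (ContinuousLinearMap.id ℝ X + T) u' = (1 + δ)⁻¹ • (u + f u • x) := by
      have hTu' : T u' = (1 + δ)⁻¹ • (f u • x) := by
        calc T u' = f u' • x := by rw [hTdef, ContinuousLinearMap.smulRight_apply]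
          _ = ((1 + δ)⁻¹ * f u) • x := by rw [hu'def, map_smul, smul_eq_mul]
          _ = (1 + δ)⁻¹ • (f u • x) := (smul_smul _ _ _).symm
      rw [ContinuousLinearMap.add_apply, ContinuousLinearMap.id_apply, hTu', hu'def, smul_add]
    calc (1 + δ)⁻¹ * ((1 + δ)⁻¹ * (1 + ‖T‖ - δ) - δ * ‖x‖)
        ≤ (1 + δ)⁻¹ * ‖u + f u • x‖ := by
          apply mul_le_mul_of_nonneg_left h2 (inv_pos.2 hδ1).le
      _ = ‖(1 + δ)⁻¹ • (u + f u • x)‖ := by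
          rw [norm_smul, Real.norm_eq_abs, abs_of_pos (inv_pos.2 hδ1)]
      _ = ‖(ContinuousLinearMap.id ℝ X + T) u'‖ := by rw [happ]
      _ ≤ ‖ContinuousLinearMap.id ℝ X + T‖ := (ContinuousLinearMap.id ℝ X + T).unit_le_opNorm u' hu'
  -- take the limit δ → 0⁺
  have hlb : 1 + ‖T‖ ≤ ‖ContinuousLinearMap.id ℝ X + T‖ := by
    have hcont : Filter.Tendsto
        (fun δ : ℝ => (1 + δ)⁻¹ * ((1 + δ)⁻¹ * (1 + ‖T‖ - δ) - δ * ‖x‖))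
        (nhdsWithin 0 (Set.Ioi 0)) (nhds (1 + ‖T‖)) := by
      have hca : ContinuousAt
          (fun δ : ℝ => (1 + δ)⁻¹ * ((1 + δ)⁻¹ * (1 + ‖T‖ - δ) - δ * ‖x‖)) 0 := by
        have hinv : ContinuousAt (fun δ : ℝ => (1 + δ)⁻¹) 0 := by
          apply ContinuousAt.inv₀ (by fun_prop) (by norm_num)
        apply hinv.mul ((hinv.mul (by fun_prop)).sub (by fun_prop))
      have htd := (hca.tendsto).mono_left
        (nhdsWithin_le_nhds : nhdsWithin (0:ℝ) (Set.Ioi 0) ≤ nhds 0)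
      convert htd using 2
      norm_num
    apply le_of_tendsto hcont
    filter_upwards [self_mem_nhdsWithin] with δ hδ
    exact key δ hδ
  have hub : ‖ContinuousLinearMap.id ℝ X + T‖ ≤ 1 + ‖T‖ := by
    calc ‖ContinuousLinearMap.id ℝ X + T‖ ≤ ‖ContinuousLinearMap.id ℝ X‖ + ‖T‖ := ContinuousLinearMap.opNorm_add_le _ _
      _ ≤ 1 + ‖T‖ := by
          have := ContinuousLinearMap.norm_id_le (E := X) (𝕜 := ℝ)
          linarith
  exact le_antisymm hub hlb
end

section
/- Every non-trivial Banach space X is a 1-complemented subspace of a Banach space with the Daugavet property: there exist a Banach space Z with the Daugavet property, a linear isometric embedding i : X → Z, and a bounded linear projection P : Z → Z with ‖P‖ = 1 whose range equals i(X). -/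
universe u v

open Metric Set

/-- A Banach superspace with the Daugavet property in which `X` embeds
isometrically as a 1-complemented subspace. -/
structure DaugavetSuperspace (X : Type u) [NormedAddCommGroup X] [NormedSpace ℝ X] where
  Z : Type u
  [nZ : NormedAddCommGroup Z]
  [sZ : NormedSpace ℝ Z]
  [cZ : CompleteSpace Z]
  daugavet : HasDaugavetProperty Z
  i : X →ₗᵢ[ℝ] Z
  P : Z →L[ℝ] Z
  idem : ∀ z : Z, P (P z) = P z
  norm_one : ‖P‖ = 1
  range_eq : Set.range (fun z => P z) = Set.range i

set_option maxHeartbeats 1000000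
set_option synthInstance.maxHeartbeats 400000

section DaugavetAux

lemma rank_one_repr {Z : Type*} [NormedAddCommGroup Z] [NormedSpace ℝ Z]
    (T : Z →L[ℝ] Z) (hT : Module.finrank ℝ (LinearMap.range (T : Z →ₗ[ℝ] Z)) = 1) :
    ∃ (g₀ : Z) (c : Z →L[ℝ] ℝ), g₀ ≠ 0 ∧ (∀ f, T f = c f • g₀) := by
  obtain ⟨v, hv0, hv⟩ := finrank_eq_one_iff'.mp hT
  have hg0 : (v : Z) ≠ 0 := fun h => hv0 (Subtype.ext h)
  have hmem : ∀ f : Z, T f ∈ LinearMap.range (T : Z →ₗ[ℝ] Z) := fun f => ⟨f, rfl⟩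
  choose co hco using fun f => hv ⟨T f, hmem f⟩
  have hco' : ∀ f, co f • (v : Z) = T f := fun f => congrArg Subtype.val (hco f)
  have uniq : ∀ (a b : ℝ), a • (v : Z) = b • (v : Z) → a = b := by
    intro a b h
    have h2 : (a - b) • (v : Z) = 0 := by rw [sub_smul, h, sub_self]
    rcases smul_eq_zero.mp h2 with h1 | h1
    · exact sub_eq_zero.mp h1
    · exact absurd h1 hg0
  have hadd : ∀ f₁ f₂, co (f₁ + f₂) = co f₁ + co f₂ := by
    intro f₁ f₂; apply uniq; rw [hco', map_add, ← hco' f₁, ← hco' f₂, add_smul]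
  have hsmul : ∀ (r : ℝ) f, co (r • f) = r * co f := by
    intro r f; apply uniq; rw [hco', map_smul, ← hco' f, mul_smul]
  set cl : Z →ₗ[ℝ] ℝ :=
    { toFun := co, map_add' := hadd, map_smul' := by intro r f; simpa using hsmul r f }
  have hgpos : (0:ℝ) < ‖(v : Z)‖ := norm_pos_iff.mpr hg0
  have hbound : ∀ f, ‖cl f‖ ≤ (‖T‖ / ‖(v : Z)‖) * ‖f‖ := by
    intro f
    have h1 : ‖co f‖ * ‖(v : Z)‖ = ‖T f‖ := by rw [← hco' f, norm_smul]
    have h2 : ‖T f‖ ≤ ‖T‖ * ‖f‖ := T.le_opNorm f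
    have h3 : ‖cl f‖ = ‖co f‖ := rfl
    rw [h3, div_mul_eq_mul_div, le_div_iff₀ hgpos]
    calc ‖co f‖ * ‖(v:Z)‖ = ‖T f‖ := h1
      _ ≤ ‖T‖ * ‖f‖ := h2
  exact ⟨(v : Z), cl.mkContinuous _ hbound, hg0, fun f => (hco' f).symm⟩

open ContinuousMap

variable {X : Type*} [NormedAddCommGroup X] [NormedSpace ℝ X]

lemma nat_sep {a b : ℕ} (h : a ≠ b) : (1:ℝ) ≤ |(a:ℝ) - (b:ℝ)| := by
  rcases lt_or_gt_of_ne h with h1 | h1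
  · rw [abs_sub_comm, abs_of_nonneg (by linarith [Nat.cast_lt (α := ℝ) |>.mpr h1])]
    have : (a:ℝ) + 1 ≤ b := by exact_mod_cast Nat.succ_le_of_lt h1
    linarith
  · rw [abs_of_nonneg (by linarith [Nat.cast_lt (α := ℝ) |>.mpr h1])]
    have : (b:ℝ) + 1 ≤ a := by exact_mod_cast Nat.succ_le_of_lt h1
    linarith

lemma norm_const_eq' (x : X) : ‖ContinuousMap.const unitInterval x‖ = ‖x‖ :=
  le_antisymm ((ContinuousMap.norm_le _ (norm_nonneg x)).mpr fun _ => le_rfl)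
    (by simpa using (ContinuousMap.const unitInterval x).norm_coe_le_norm 0)

instance [Nontrivial X] : Nontrivial C(unitInterval, X) := by
  obtain ⟨x, y, hxy⟩ := exists_pair_ne X
  exact ⟨ContinuousMap.const _ x, ContinuousMap.const _ y,
    fun h => hxy (by simpa using congrFun (congrArg DFunLike.coe h) 0)⟩

lemma exists_sep_points (t₀ : unitInterval) {ρ : ℝ} (hρpos : 0 < ρ) (n : ℕ) (hnpos : 0 < n) :
    ∃ (P : Fin n → unitInterval) (r : ℝ), 0 < r ∧ (∀ j, dist (P j) t₀ < ρ) ∧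
      (∀ j k, j ≠ k → 4*r ≤ dist (P j) (P k)) := by
  have hnR : (0:ℝ) < n := Nat.cast_pos.mpr hnpos
  set η : ℝ := min ρ (1/2) / (2*(n+1)) with hηdef
  have hη : 0 < η := by positivity
  have hη1 : (n+1)*η ≤ ρ/2 := by
    rw [hηdef, ← mul_div_assoc, div_le_div_iff₀ (by positivity) (by norm_num : (0:ℝ) < 2)]
    have h7 : min ρ (1/2) ≤ ρ := min_le_left _ _
    nlinarith
  have hη2 : (n+1)*η ≤ 1/4 := by
    rw [hηdef, ← mul_div_assoc, div_le_div_iff₀ (by positivity) (by norm_num : (0:ℝ) < 4)]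
    have h7 : min ρ (1/2) ≤ 1/2 := min_le_right _ _
    nlinarith
  set s : ℝ := if (t₀:ℝ) ≤ 1/2 then 1 else -1 with hsdef
  have hs : |s| = 1 := by rw [hsdef]; split_ifs <;> simp
  have hs_cases : ((t₀:ℝ) ≤ 1/2 ∧ s = 1) ∨ (1/2 < (t₀:ℝ) ∧ s = -1) := by
    rw [hsdef]; split_ifs with h
    · exact Or.inl ⟨h, rfl⟩
    · exact Or.inr ⟨lt_of_not_ge h, rfl⟩
  set p : Fin n → ℝ := fun j => (t₀:ℝ) + s*((j:ℕ)+1)*η with hpdef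
  have hjη : ∀ j : Fin n, ((j:ℕ)+1 : ℝ)*η ≤ (n+1)*η := by
    intro j
    gcongr
    exact_mod_cast Nat.cast_le.mpr j.2.le
  have hjηpos : ∀ j : Fin n, 0 < ((j:ℕ)+1 : ℝ)*η := by
    intro j; positivity
  have h0 := unitInterval.nonneg t₀
  have h1 := unitInterval.le_one t₀
  have pmem : ∀ j, p j ∈ unitInterval := by
    intro j
    have h2 := hjη j
    have h3 := hjηpos j
    have h4 := hη2
    show 0 ≤ p j ∧ p j ≤ 1
    rw [hpdef]
    rcases hs_cases with ⟨h, hs1⟩ | ⟨h, hs1⟩ <;> rw [hs1] <;> constructor <;> simp only [] <;>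
      nlinarith
  refine ⟨fun j => ⟨p j, pmem j⟩, η/4, by positivity, ?_, ?_⟩
  · intro j
    rw [Subtype.dist_eq, Real.dist_eq]
    have h8 : p j - (t₀:ℝ) = s*(((j:ℕ):ℝ)+1)*η := by rw [hpdef]; ring
    rw [h8, abs_mul, abs_mul, hs, one_mul,
      abs_of_nonneg (by positivity : (0:ℝ) ≤ ((j:ℕ):ℝ)+1), abs_of_pos hη]
    calc (((j:ℕ):ℝ)+1)*η ≤ (n+1)*η := hjη j
      _ ≤ ρ/2 := hη1
      _ < ρ := by linarith
  · intro j k hjk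
    rw [Subtype.dist_eq, Real.dist_eq]
    have h9 : p j - p k = s * ((((j:ℕ):ℝ)) - (((k:ℕ):ℝ))) * η := by rw [hpdef]; ring
    rw [h9, abs_mul, abs_mul, hs, one_mul, abs_of_pos hη]
    have h10 : (1:ℝ) ≤ |((j:ℕ):ℝ) - ((k:ℕ):ℝ)| := nat_sep (fun h => hjk (Fin.ext h))
    nlinarith

theorem daugavet_CIX [Nontrivial X] :
    ∀ T : C(unitInterval, X) →L[ℝ] C(unitInterval, X),
      Module.finrank ℝ (LinearMap.range (T : C(unitInterval, X) →ₗ[ℝ] C(unitInterval, X))) = 1 →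
      ‖ContinuousLinearMap.id ℝ C(unitInterval, X) + T‖ = 1 + ‖T‖ := by
  intro T hT
  obtain ⟨g₀, c, hg0, hrep⟩ := rank_one_repr T hT
  have hTne : T ≠ 0 := by
    intro h
    rw [h] at hT
    rw [show ((0 : C(unitInterval,X) →L[ℝ] C(unitInterval,X)) : C(unitInterval,X) →ₗ[ℝ] C(unitInterval,X)) = 0 from rfl, LinearMap.range_zero, finrank_bot] at hT
    exact one_ne_zero hT.symm
  have hTpos : (0:ℝ) < ‖T‖ := by
    rcases (norm_nonneg T).lt_or_eq with h | h
    · exact h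
    · exact absurd ((ContinuousLinearMap.opNorm_zero_iff T).mp h.symm) hTne
  have hid : ‖ContinuousLinearMap.id ℝ C(unitInterval, X)‖ = 1 := ContinuousLinearMap.norm_id
  refine le_antisymm ?_ ?_
  · calc ‖ContinuousLinearMap.id ℝ C(unitInterval, X) + T‖
        ≤ ‖ContinuousLinearMap.id ℝ C(unitInterval, X)‖ + ‖T‖ := ContinuousLinearMap.opNorm_add_le _ _
      _ = 1 + ‖T‖ := by rw [hid]
  apply le_of_forall_pos_le_add
  intro ε hε
  set M : ℝ := ‖g₀‖ with hMdef
  have hM : 0 < M := norm_pos_iff.mpr hg0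
  set C : ℝ := ‖c‖ with hCdef
  have hcne : c ≠ 0 := by
    intro h
    apply hTne
    ext f t
    simp [hrep f, h]
  have hC : 0 < C := by
    rcases (norm_nonneg c).lt_or_eq with h | h
    · exact h
    · exact absurd ((ContinuousLinearMap.opNorm_zero_iff c).mp h.symm) hcne
  have hTCM : ∀ f, ‖T f‖ = |c f| * M := by
    intro f
    rw [hrep f, norm_smul, Real.norm_eq_abs]
  -- choose f₀ near-norming for T
  set ε' : ℝ := min (ε/4) (‖T‖/2) with hε'def
  have hε' : 0 < ε' := lt_min (by linarith) (by linarith)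
  obtain ⟨f₀, hf₀1, hf₀2⟩ := T.exists_lt_apply_of_lt_opNorm (r := ‖T‖ - ε') (by linarith)
  set a : ℝ := |c f₀| with hadef
  have haM : ‖T‖ - ε' < a * M := by rw [← hTCM]; exact hf₀2
  have ha : 0 < a := by
    by_contra h
    push_neg at h
    have h0 : a = 0 := le_antisymm h (abs_nonneg _)
    rw [h0, zero_mul] at haM
    have h1 : ε' ≤ ‖T‖/2 := min_le_right _ _
    linarith
  have haC : a ≤ C := by
    calc a = |c f₀| := rfl
      _ ≤ ‖c‖ * ‖f₀‖ := c.le_opNorm f₀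
      _ ≤ ‖c‖ * 1 := by gcongr
      _ = C := by rw [mul_one]
  set f : C(unitInterval, X) := if 0 ≤ c f₀ then f₀ else -f₀ with hfdef
  have hfle : ‖f‖ ≤ 1 := by
    rw [hfdef]
    split_ifs
    · linarith
    · rw [norm_neg]; linarith
  have hcf : c f = a := by
    rw [hfdef, hadef]
    split_ifs with h
    · rw [abs_of_nonneg h]
    · rw [map_neg, abs_of_neg (lt_of_not_ge h)]
  -- max point of g₀
  obtain ⟨t₀, -, hmax⟩ := isCompact_univ.exists_isMaxOn Set.univ_nonempty
    ((map_continuous g₀).norm.continuousOn)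
  have hMt : ‖g₀ t₀‖ = M := le_antisymm (g₀.norm_coe_le_norm t₀)
    ((g₀.norm_le_of_nonempty).mpr (fun t => hmax (Set.mem_univ t)))
  -- delta and rho
  set δ : ℝ := min (ε/(4*(C+1))) (M/2) with hδdef
  have hδ : 0 < δ := lt_min (by positivity) (by positivity)
  have hδ1 : C * δ ≤ ε/4 := by
    have h1 : δ ≤ ε/(4*(C+1)) := min_le_left _ _
    have h2 : C * δ ≤ C * (ε/(4*(C+1))) := by gcongr
    have h3 : C * (ε/(4*(C+1))) ≤ ε/4 := by
      rw [← mul_div_assoc, div_le_div_iff₀ (by positivity) (by norm_num : (0:ℝ) < 4)]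
      nlinarith
    linarith
  have hδ2 : δ ≤ M/2 := min_le_right _ _
  obtain ⟨ρ, hρpos, hρ⟩ := Metric.continuousAt_iff.mp ((map_continuous g₀).norm.continuousAt) δ hδ
  have hρ' : ∀ t : unitInterval, dist t t₀ < ρ → M - δ < ‖g₀ t‖ := by
    intro t ht
    have h5 := hρ ht
    rw [Real.dist_eq, hMt] at h5
    have h6 := abs_sub_lt_iff.mp h5
    linarith [h6.2]
  -- choose n
  obtain ⟨n, hn⟩ := exists_nat_gt (max (2*C/a) (8*C*M/ε))
  have hn1 : 2*C/a < n := lt_of_le_of_lt (le_max_left _ _) hn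
  have hn2 : 8*C*M/ε < n := lt_of_le_of_lt (le_max_right _ _) hn
  have hnpos : 0 < n := by
    rcases Nat.eq_zero_or_pos n with h | h
    · subst h
      norm_num at hn1
      nlinarith [div_pos (by positivity : (0:ℝ) < 2*C) ha]
    · exact h
  have hnR : (0:ℝ) < n := Nat.cast_pos.mpr hnpos
  have hnc1 : 2*C/n ≤ a := by
    rw [div_le_iff₀ hnR]
    rw [div_lt_iff₀ ha] at hn1
    nlinarith
  have hnc2 : 2*C*M/n ≤ ε/4 := by
    rw [div_le_iff₀ hnR]
    rw [div_lt_iff₀ hε] at hn2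
    nlinarith
  obtain ⟨Pp, r, hr, hPt₀, hPsep⟩ := exists_sep_points t₀ hρpos n hnpos
  have hgt : ∀ j, M - δ < ‖g₀ (Pp j)‖ := fun j => hρ' _ (hPt₀ j)
  have hMδ : 0 < M - δ := by linarith
  have hwpos : ∀ j, (0:ℝ) < ‖g₀ (Pp j)‖ := fun j => lt_trans hMδ (hgt j)
  set u : Fin n → X := fun j => ‖g₀ (Pp j)‖⁻¹ • g₀ (Pp j) with hudef
  have hu1 : ∀ j, ‖u j‖ = 1 := by
    intro j
    show ‖(‖g₀ (Pp j)‖⁻¹ • g₀ (Pp j) : X)‖ = 1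
    rw [norm_smul, norm_inv, norm_norm, inv_mul_cancel₀ (ne_of_gt (hwpos j))]
  set lam : Fin n → C(unitInterval, ℝ) := fun j =>
    ⟨fun t => max 0 (1 - dist t (Pp j) / r),
      continuous_const.max (continuous_const.sub ((continuous_id.dist continuous_const).div_const r))⟩
    with hlamdef
  have hlam0 : ∀ j t, 0 ≤ lam j t := fun j t => le_max_left _ _
  have hlam1 : ∀ j t, lam j t ≤ 1 := by
    intro j t
    show max 0 (1 - dist t (Pp j) / r) ≤ 1
    apply max_le (by norm_num)
    have : 0 ≤ dist t (Pp j) / r := by positivity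
    linarith
  have hlamP : ∀ j, lam j (Pp j) = 1 := by
    intro j
    show max 0 (1 - dist (Pp j) (Pp j) / r) = 1
    rw [dist_self, zero_div, sub_zero, max_eq_right (by norm_num : (0:ℝ) ≤ 1)]
  have hlamne : ∀ j t, lam j t ≠ 0 → dist t (Pp j) < r := by
    intro j t hne
    by_contra hge
    push_neg at hge
    apply hne
    show max 0 (1 - dist t (Pp j) / r) = 0
    apply max_eq_left
    rw [sub_nonpos, le_div_iff₀ hr, one_mul]
    exact hge
  have hft : ∀ t, ‖f t‖ ≤ 1 := fun t => (f.norm_coe_le_norm t).trans hfle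
  set gg : Fin n → C(unitInterval, X) := fun j =>
    ⟨fun t => f t + lam j t • (u j - f t),
      (map_continuous f).add (((map_continuous (lam j)).smul
        (continuous_const.sub (map_continuous f))))⟩ with hggdef
  have hggapp : ∀ j t, gg j t = f t + lam j t • (u j - f t) := fun j t => rfl
  have hgg1 : ∀ j, ‖gg j‖ ≤ 1 := by
    intro j
    apply (ContinuousMap.norm_le _ zero_le_one).mpr
    intro t
    have hcomb : gg j t = (1 - lam j t) • f t + lam j t • u j := by
      rw [hggapp]
      rw [smul_sub, sub_smul, one_smul]
      abel
    rw [hcomb]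
    calc ‖(1 - lam j t) • f t + lam j t • u j‖
        ≤ ‖(1 - lam j t) • f t‖ + ‖lam j t • u j‖ := norm_add_le _ _
      _ = |1 - lam j t| * ‖f t‖ + |lam j t| * ‖u j‖ := by
          rw [norm_smul, norm_smul, Real.norm_eq_abs, Real.norm_eq_abs]
      _ = (1 - lam j t) * ‖f t‖ + lam j t * 1 := by
          rw [abs_of_nonneg (by linarith [hlam1 j t]), abs_of_nonneg (hlam0 j t), hu1 j]
      _ ≤ (1 - lam j t) * 1 + lam j t * 1 := by
          have := hlam1 j t
          have := hlam0 j t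
          have := hft t
          nlinarith
      _ = 1 := by ring
  set hh : Fin n → C(unitInterval, X) := fun j => gg j - f with hhdef
  have hhapp : ∀ j t, hh j t = lam j t • (u j - f t) := by
    intro j t
    show gg j t - f t = _
    rw [hggapp, add_sub_cancel_left]
  have hggh : ∀ j, gg j = f + hh j := by
    intro j
    ext t
    rw [ContinuousMap.add_apply, hhapp, hggapp]
  set σ : Fin n → ℝ := fun j => if 0 ≤ c (hh j) then 1 else -1 with hσdef
  have hσ1 : ∀ j, σ j * c (hh j) = |c (hh j)| := by
    intro j
    show (if 0 ≤ c (hh j) then (1:ℝ) else -1) * c (hh j) = |c (hh j)|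
    split_ifs with h
    · rw [abs_of_nonneg h, one_mul]
    · rw [abs_of_neg (lt_of_not_ge h)]; ring
  have hσabs : ∀ j, |σ j| = 1 := by
    intro j
    show |if 0 ≤ c (hh j) then (1:ℝ) else -1| = 1
    split_ifs <;> simp
  have hsum1 : ∀ t, (∑ j, lam j t) ≤ 1 := by
    intro t
    by_cases hz : ∀ j, lam j t = 0
    · rw [Finset.sum_eq_zero (fun j _ => hz j)]; norm_num
    · push_neg at hz
      obtain ⟨j₀, hj₀⟩ := hz
      have hothers : ∀ k ∈ Finset.univ, k ≠ j₀ → lam k t = 0 := by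
        intro k _ hk
        by_contra hkne
        have d1 := hlamne j₀ t hj₀
        have d2 := hlamne k t hkne
        have d3 := hPsep k j₀ hk
        have d4 := dist_triangle (Pp k) t (Pp j₀)
        rw [dist_comm (Pp k) t] at d4
        linarith
      rw [Finset.sum_eq_single j₀ hothers (fun h => absurd (Finset.mem_univ j₀) h)]
      exact hlam1 j₀ t
  have hnormsum : ‖∑ j, σ j • hh j‖ ≤ 2 := by
    apply (ContinuousMap.norm_le _ (by norm_num)).mpr
    intro t
    have happ : (∑ j, σ j • hh j) t = ∑ j, σ j • (lam j t • (u j - f t)) := by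
      rw [ContinuousMap.sum_apply]
      exact Finset.sum_congr rfl (fun j _ => by rw [ContinuousMap.smul_apply, hhapp])
    rw [happ]
    calc ‖∑ j, σ j • (lam j t • (u j - f t))‖
        ≤ ∑ j, ‖σ j • (lam j t • (u j - f t))‖ := norm_sum_le _ _
      _ ≤ ∑ j, lam j t * 2 := by
          apply Finset.sum_le_sum
          intro j _
          rw [norm_smul, norm_smul, Real.norm_eq_abs, Real.norm_eq_abs, hσabs j, one_mul,
            abs_of_nonneg (hlam0 j t)]
          have h2 : ‖u j - f t‖ ≤ 2 := by
            calc ‖u j - f t‖ ≤ ‖u j‖ + ‖f t‖ := norm_sub_le _ _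
              _ ≤ 1 + 1 := by rw [hu1 j]; linarith [hft t]
              _ = 2 := by norm_num
          nlinarith [hlam0 j t]
      _ = 2 * ∑ j, lam j t := by rw [Finset.mul_sum]; exact Finset.sum_congr rfl (fun j _ => by ring)
      _ ≤ 2 := by linarith [hsum1 t]
  have hsumabs : (∑ j, |c (hh j)|) ≤ 2*C := by
    calc (∑ j, |c (hh j)|) = ∑ j, σ j * c (hh j) := Finset.sum_congr rfl (fun j _ => (hσ1 j).symm)
      _ = c (∑ j, σ j • hh j) := by
          rw [map_sum]
          exact Finset.sum_congr rfl (fun j _ => by rw [map_smul, smul_eq_mul])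
      _ ≤ |c (∑ j, σ j • hh j)| := le_abs_self _
      _ ≤ ‖c‖ * ‖∑ j, σ j • hh j‖ := by
          rw [← Real.norm_eq_abs]; exact c.le_opNorm _
      _ ≤ C * 2 := by
          apply mul_le_mul le_rfl hnormsum (norm_nonneg _) hC.le
      _ = 2*C := by ring
  have hpig : ∃ j, |c (hh j)| ≤ 2*C/n := by
    by_contra h
    push_neg at h
    haveI : Nonempty (Fin n) := ⟨⟨0, hnpos⟩⟩
    have hlt : (∑ _j : Fin n, (2*C/n : ℝ)) < ∑ j, |c (hh j)| :=
      Finset.sum_lt_sum_of_nonempty Finset.univ_nonempty (fun j _ => h j)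
    rw [Finset.sum_const, Finset.card_univ, Fintype.card_fin, nsmul_eq_mul] at hlt
    have heq : (n:ℝ) * (2*C/n) = 2*C := by field_simp
    linarith
  obtain ⟨j, hj⟩ := hpig
  set b : ℝ := c (gg j) with hbdef
  have hba : b = a + c (hh j) := by
    rw [hbdef, hggh j, map_add, hcf]
  have hbge : a - 2*C/n ≤ b := by
    have := neg_abs_le (c (hh j))
    linarith
  have hb0 : 0 ≤ b := by linarith
  have heval : ((ContinuousLinearMap.id ℝ C(unitInterval, X) + T) (gg j)) (Pp j)
      = u j + b • (g₀ (Pp j)) := by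
    rw [ContinuousLinearMap.add_apply, ContinuousLinearMap.id_apply, hrep (gg j),
      ContinuousMap.add_apply, ContinuousMap.smul_apply]
    congr 1
    rw [hggapp, hlamP j, one_smul, add_sub_cancel]
  have hnorm_eval : ‖u j + b • g₀ (Pp j)‖ = 1 + b * ‖g₀ (Pp j)‖ := by
    have hwne : ‖g₀ (Pp j)‖ ≠ 0 := ne_of_gt (hwpos j)
    have hcombine : u j + b • g₀ (Pp j) = (‖g₀ (Pp j)‖⁻¹ + b) • g₀ (Pp j) := by
      rw [add_smul]
    rw [hcombine, norm_smul, Real.norm_eq_abs,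
      abs_of_nonneg (by positivity : (0:ℝ) ≤ ‖g₀ (Pp j)‖⁻¹ + b), add_mul,
      inv_mul_cancel₀ hwne]
  have hfinal1 : 1 + b * ‖g₀ (Pp j)‖ ≤ ‖ContinuousLinearMap.id ℝ C(unitInterval, X) + T‖ := by
    rw [← hnorm_eval, ← heval]
    calc ‖((ContinuousLinearMap.id ℝ C(unitInterval, X) + T) (gg j)) (Pp j)‖
        ≤ ‖(ContinuousLinearMap.id ℝ C(unitInterval, X) + T) (gg j)‖ :=
          ContinuousMap.norm_coe_le_norm _ _
      _ ≤ ‖ContinuousLinearMap.id ℝ C(unitInterval, X) + T‖ * ‖gg j‖ :=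
          ContinuousLinearMap.le_opNorm _ _
      _ ≤ ‖ContinuousLinearMap.id ℝ C(unitInterval, X) + T‖ * 1 := by
          exact mul_le_mul_of_nonneg_left (hgg1 j) (ContinuousLinearMap.opNorm_nonneg _)
      _ = ‖ContinuousLinearMap.id ℝ C(unitInterval, X) + T‖ := mul_one _
  -- final arithmetic
  have key : (a - 2*C/n) * (M - δ) ≤ b * ‖g₀ (Pp j)‖ :=
    mul_le_mul hbge (hgt j).le hMδ.le hb0
  have e2 : a*δ ≤ ε/4 := le_trans (mul_le_mul_of_nonneg_right haC hδ.le) hδ1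
  have e3 : (2*C/n)*M ≤ ε/4 := by
    have : (2*C/n)*M = 2*C*M/n := by ring
    rw [this]
    exact hnc2
  have e4 : (0:ℝ) ≤ (2*C/n)*δ := by positivity
  have e5 : ‖T‖ - ε/4 ≤ a*M := by
    have := min_le_left (ε/4) (‖T‖/2)
    linarith
  have e6 : ‖T‖ - 3*(ε/4) ≤ (a - 2*C/n) * (M - δ) := by nlinarith
  linarith

noncomputable def constIso (X : Type u) [NormedAddCommGroup X] [NormedSpace ℝ X] :
    X →ₗᵢ[ℝ] C(unitInterval, X) where
  toLinearMap :=
    { toFun := fun x => ContinuousMap.const unitInterval x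
      map_add' := fun x y => by ext t; simp
      map_smul' := fun r x => by ext t; simp }
  norm_map' := fun x => norm_const_eq' x

noncomputable def Pproj (X : Type u) [NormedAddCommGroup X] [NormedSpace ℝ X] :
    C(unitInterval, X) →L[ℝ] C(unitInterval, X) :=
  LinearMap.mkContinuous
    { toFun := fun z => ContinuousMap.const unitInterval (z 0)
      map_add' := fun z w => by ext t; simp
      map_smul' := fun r z => by ext t; simp } 1
    (fun z => by
      rw [one_mul]
      show ‖ContinuousMap.const unitInterval (z 0)‖ ≤ ‖z‖
      rw [norm_const_eq']
      exact z.norm_coe_le_norm 0)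

end DaugavetAux

theorem exists_daugavet_superspace
    (X : Type u) [NormedAddCommGroup X] [NormedSpace ℝ X]
    [CompleteSpace X] [Nontrivial X] :
    Nonempty (DaugavetSuperspace X) := by
  have hle : ‖Pproj X‖ ≤ 1 := LinearMap.mkContinuous_norm_le _ zero_le_one _
  obtain ⟨x, hx⟩ := exists_ne (0 : X)
  have h1 : ‖Pproj X (ContinuousMap.const unitInterval x)‖ = ‖x‖ := by
    show ‖ContinuousMap.const unitInterval ((ContinuousMap.const unitInterval x) 0)‖ = ‖x‖
    rw [ContinuousMap.const_apply, norm_const_eq']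
  have h2 := (Pproj X).le_opNorm (ContinuousMap.const unitInterval x)
  rw [h1, norm_const_eq'] at h2
  have hxpos : 0 < ‖x‖ := norm_pos_iff.mpr hx
  have hP1 : ‖Pproj X‖ = 1 := by
    apply le_antisymm hle
    nlinarith
  refine ⟨⟨C(unitInterval, X), daugavet_CIX, constIso X, Pproj X, fun z => rfl, hP1, ?_⟩⟩
  ext z
  constructor
  · rintro ⟨w, rfl⟩
    exact ⟨w 0, rfl⟩
  · rintro ⟨y, rfl⟩
    exact ⟨ContinuousMap.const unitInterval y, rfl⟩
end

section
/- Let X be a Banach space which is a super-ideal in every superspace, i.e., for every Banach space Y and every linear isometric embedding i : X → Y, the subspace i(X) is a super-ideal in Y. Then X is a Gurariĭ space. -/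
universe u v

set_option synthInstance.maxHeartbeats 1000000
set_option maxHeartbeats 1000000
set_option linter.unusedSectionVars false


open Metric Set

section Aux
variable (X : Type u) [NormedAddCommGroup X] [NormedSpace ℝ X]
variable (F : Type) [NormedAddCommGroup F] [NormedSpace ℝ F] [FiniteDimensional ℝ F]
variable (E : Subspace ℝ F) (TE : E →ₗᵢ[ℝ] X)

abbrev AuxW := WithLp 1 (X × F)

noncomputable def auxι : E →ₗ[ℝ] AuxW X F :=
  (WithLp.linearEquiv 1 ℝ (X × F)).symm.toLinearMap ∘ₗ (TE.toLinearMap.prod (-(E.subtype)))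

noncomputable def auxN : Submodule ℝ (AuxW X F) := LinearMap.range (auxι X F E TE)

instance : FiniteDimensional ℝ (auxN X F E TE) :=
  Module.Finite.range (auxι X F E TE)

lemma auxN_closed : IsClosed ((auxN X F E TE : Set (AuxW X F))) :=
  Submodule.closed_of_finiteDimensional _

lemma auxW_norm_eq (w : AuxW X F) : ‖w‖ = ‖w.fst‖ + ‖w.snd‖ := by
  rw [WithLp.prod_norm_eq_add (by norm_num)]; norm_num

noncomputable abbrev AuxY := AuxW X F ⧸ auxN X F E TE

noncomputable instance : NormedAddCommGroup (AuxY X F E TE) :=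
  @Submodule.Quotient.normedAddCommGroup _ _ _ _ _ _ (auxN_closed X F E TE)

noncomputable def auxj1 : X →ₗ[ℝ] AuxY X F E TE :=
  (auxN X F E TE).mkQ ∘ₗ (WithLp.linearEquiv 1 ℝ (X × F)).symm.toLinearMap ∘ₗ
    (LinearMap.inl ℝ X F)

noncomputable def auxj2 : F →ₗ[ℝ] AuxY X F E TE :=
  (auxN X F E TE).mkQ ∘ₗ (WithLp.linearEquiv 1 ℝ (X × F)).symm.toLinearMap ∘ₗ
    (LinearMap.inr ℝ X F)

lemma norm_auxj1 (x : X) : ‖auxj1 X F E TE x‖ = ‖x‖ := by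
  apply le_antisymm
  · refine le_trans (Submodule.Quotient.norm_mk_le _ _) ?_
    rw [auxW_norm_eq]
    simp
  · refine le_of_forall_pos_le_add fun ε hε => ?_
    obtain ⟨m, hm, hlt⟩ := Submodule.Quotient.norm_mk_lt (auxj1 X F E TE x) hε
    have : m - (WithLp.equiv 1 (X × F)).symm (x, 0) ∈ auxN X F E TE := by
      rw [← Submodule.Quotient.eq] at *
      exact hm
    obtain ⟨e, he⟩ := this
    have h1 : m.fst = TE e + x := by
      simpa [add_comm, auxι] using congrArg WithLp.fst (sub_eq_iff_eq_add.mp he.symm)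
    have h2 : m.snd = -(e : F) := by
      simpa [auxι] using congrArg WithLp.snd (sub_eq_iff_eq_add.mp he.symm)
    have : ‖x‖ ≤ ‖m‖ := by
      rw [auxW_norm_eq, h1, h2, norm_neg]
      calc ‖x‖ = ‖(TE e + x) - TE e‖ := by rw [add_sub_cancel_left]
        _ ≤ ‖TE e + x‖ + ‖TE e‖ := norm_sub_le _ _
        _ = ‖TE e + x‖ + ‖(e : F)‖ := by rw [TE.norm_map]; rfl
    linarith

lemma norm_auxj2 (f : F) : ‖auxj2 X F E TE f‖ = ‖f‖ := by
  apply le_antisymm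
  · refine le_trans (Submodule.Quotient.norm_mk_le _ _) ?_
    rw [auxW_norm_eq]
    simp
  · refine le_of_forall_pos_le_add fun ε hε => ?_
    obtain ⟨m, hm, hlt⟩ := Submodule.Quotient.norm_mk_lt (auxj2 X F E TE f) hε
    have : m - (WithLp.equiv 1 (X × F)).symm (0, f) ∈ auxN X F E TE := by
      rw [← Submodule.Quotient.eq] at *
      exact hm
    obtain ⟨e, he⟩ := this
    have h1 : m.fst = TE e := by
      simpa [auxι] using congrArg WithLp.fst (sub_eq_iff_eq_add.mp he.symm)
    have h2 : m.snd = -(e : F) + f := by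
      simpa [add_comm, auxι] using congrArg WithLp.snd (sub_eq_iff_eq_add.mp he.symm)
    have : ‖f‖ ≤ ‖m‖ := by
      rw [auxW_norm_eq, h1, h2, TE.norm_map]
      calc ‖f‖ = ‖(e : F) + (-(e:F) + f)‖ := by rw [add_neg_cancel_left]
        _ ≤ ‖(e : F)‖ + ‖-(e:F) + f‖ := norm_add_le _ _
        _ = ‖(e : E)‖ + ‖-(e:F) + f‖ := rfl
    linarith

lemma auxj2_eq (e : E) : auxj2 X F E TE (e : F) = auxj1 X F E TE (TE e) := by
  show Submodule.Quotient.mk _ = Submodule.Quotient.mk _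
  rw [Submodule.Quotient.eq]
  exact ⟨-e, by rw [WithLp.ext_iff]; apply Prod.ext <;> simp [auxι]⟩

end Aux

theorem gurarii_of_superIdeal_in_every_superspace
    (X : Type u) [NormedAddCommGroup X] [NormedSpace ℝ X] [CompleteSpace X]
    (h : ∀ (Y : Type u) [NormedAddCommGroup Y] [NormedSpace ℝ Y] [CompleteSpace Y],
      ∀ i : X →ₗᵢ[ℝ] Y, IsSuperIdeal (LinearMap.range i.toLinearMap)) :
    IsGurarii X := by
  intro ε hε F _ _ _ E TE
  let Y := AuxY X F E TE
  let j1 : X →ₗᵢ[ℝ] Y := ⟨auxj1 X F E TE, norm_auxj1 X F E TE⟩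
  have hsi := h Y j1
  let E' : Submodule ℝ Y := LinearMap.range (auxj2 X F E TE)
  haveI : FiniteDimensional ℝ E' := Module.Finite.range _
  obtain ⟨T, hTfix, hTnorm⟩ := hsi ε hε E' inferInstance
  let ψ : X ≃ₗ[ℝ] LinearMap.range j1.toLinearMap :=
    LinearEquiv.ofInjective j1.toLinearMap j1.injective
  let v : F →ₗ[ℝ] E' := (auxj2 X F E TE).rangeRestrict
  have hψcoe : ∀ x : X, ((ψ x : LinearMap.range j1.toLinearMap) : Y) = j1 x := fun x => rfl
  have hψ : ∀ z : LinearMap.range j1.toLinearMap, ‖ψ.symm z‖ = ‖z‖ := by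
    intro z
    have hz : j1 (ψ.symm z) = (z : Y) := by
      rw [← hψcoe, ψ.apply_symm_apply]
    calc ‖ψ.symm z‖ = ‖j1 (ψ.symm z)‖ := (j1.norm_map _).symm
      _ = ‖(z : Y)‖ := by rw [hz]
      _ = ‖z‖ := rfl
  have hvcoe : ∀ f : F, ((v f : E') : Y) = auxj2 X F E TE f := fun f => rfl
  have hvnorm : ∀ f : F, ‖v f‖ = ‖f‖ := by
    intro f
    calc ‖v f‖ = ‖((v f : E') : Y)‖ := rfl
      _ = ‖f‖ := by rw [hvcoe]; exact norm_auxj2 X F E TE f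
  refine ⟨ψ.symm.toLinearMap ∘ₗ T ∘ₗ v, ?_, ?_⟩
  · intro e
    show ψ.symm (T (v (e : F))) = TE e
    rw [LinearEquiv.symm_apply_eq]
    have hmem : ((v (e : F) : E') : Y) ∈ LinearMap.range j1.toLinearMap := by
      refine ⟨TE e, ?_⟩
      rw [hvcoe]
      exact (auxj2_eq X F E TE e).symm
    have hfix := hTfix (v (e : F)) hmem
    apply Subtype.ext
    rw [hfix, hvcoe, hψcoe]
    exact auxj2_eq X F E TE e
  · intro f
    have hn := hTnorm (v f)
    have : ‖ψ.symm (T (v f))‖ = ‖T (v f)‖ := hψ _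
    show (1 + ε)⁻¹ * ‖f‖ ≤ ‖ψ.symm (T (v f))‖ ∧ ‖ψ.symm (T (v f))‖ ≤ (1 + ε) * ‖f‖
    rw [this]
    rw [hvnorm f] at hn
    exact hn
end
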